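/- arXiv:2601.23101 — 2 statements merged into one kernel-verified Lean document; each statement's English description precedes it below -/
import Mathlib

section
/- If H is a 2-connected graph that is a bipartite minor of a graph G, then H is a bipartite minor of some block of G. -/
open SimpleGraph

/-- Finite simple graphs are modelled as subgraphs of the complete graph on `ℕ`. -/
abbrev FG : Type := SimpleGraph.Subgraph (⊤ : SimpleGraph ℕ)

/-- Build a graph from a vertex set and a (not necessarily symmetric) edge description. -/
def ofRel (V : Set ℕ) (r : ℕ → ℕ → Prop) : FG where
  verts := V
  Adj x y := x ≠ y ∧ x ∈ V ∧ y ∈ V ∧ (r x y ∨ r y x)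
  adj_sub := fun h => (SimpleGraph.top_adj _ _).mpr h.1
  edge_vert := fun h => h.2.1
  symm := ⟨fun _ _ h => ⟨h.1.symm, h.2.2.1, h.2.1, h.2.2.2.symm⟩⟩

/-- The cycle `C_n` on `n` vertices. -/
def cycleFG (n : ℕ) : FG := ofRel {x | x < n} (fun i j => j = (i + 1) % n)

/-- The path `P_n` on `n` vertices. -/
def pathFG (n : ℕ) : FG := ofRel {x | x < n} (fun i j => j = i + 1)

/-- The bull `B(l, l1)`: a cycle (snout) of length `l` on `0,…,l-1`, together with a horn,
namely a path on the `l1` vertices `l,…,l+l1-1` joined by an edge to the snout vertex `0`. -/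
def bullFG (l l1 : ℕ) : FG :=
  ofRel {x | x < l + l1}
    (fun i j => (i < l ∧ j = (i + 1) % l) ∨ (l ≤ i ∧ j = i + 1 ∧ j < l + l1) ∨ (i = 0 ∧ j = l))

/-- The one-eared dog `D(l, l1)`: a snout cycle of length `l` on `0,…,l-1` together with an ear,
namely a cycle of length `l1` sharing the snout edge `{0,1}` (its `l1 - 2` new vertices
are `l,…,l+l1-3`). -/
def dog1FG (l l1 : ℕ) : FG :=
  ofRel {x | x < l + l1 - 2}
    (fun i j => (i < l ∧ j = (i + 1) % l) ∨ (i = 1 ∧ j = l) ∨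
      (l ≤ i ∧ j = i + 1 ∧ j ≤ l + l1 - 3) ∨ (i = l + l1 - 3 ∧ j = 0))

/-- The two-eared dog `D(l, l1, l2)`: a snout cycle of length `l` on `0,…,l-1` together with
an ear of length `l1` sharing the snout edge `{0,1}` (new vertices `l,…,l+l1-3`) and
an ear of length `l2` sharing the snout edge `{2,3}` (new vertices `l+l1-2,…,l+l1+l2-5`),
so the ears are attached at the consecutive snout vertices `0,1,2,3`. -/
def dog2FG (l l1 l2 : ℕ) : FG :=
  ofRel {x | x < l + l1 + l2 - 4}
    (fun i j => (i < l ∧ j = (i + 1) % l) ∨ (i = 1 ∧ j = l) ∨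
      (l ≤ i ∧ j = i + 1 ∧ j ≤ l + l1 - 3) ∨ (i = l + l1 - 3 ∧ j = 0) ∨
      (i = 3 ∧ j = l + l1 - 2) ∨ (l + l1 - 2 ≤ i ∧ j = i + 1 ∧ j ≤ l + l1 + l2 - 5) ∨
      (i = l + l1 + l2 - 5 ∧ j = 2))

/-- The tree `T_l`: a path `0,…,l` of length `l` (i.e. on `l+1` vertices), with the two extra
leaves `l+1, l+2` attached to the endpoint `0` and the two extra leaves `l+3, l+4` attached to
the endpoint `l`.  (Equivalently: obtained from two paths on three vertices and a path of
length `l` by identifying the endpoints of the latter with the internal vertices of the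
former two.) -/
def treeFG (l : ℕ) : FG :=
  ofRel {x | x < l + 5}
    (fun i j => (j = i + 1 ∧ j ≤ l) ∨ (i = 0 ∧ (j = l + 1 ∨ j = l + 2)) ∨
      (i = l ∧ (j = l + 3 ∨ j = l + 4)))

/-- The contraction of the vertices `u` and `v` in `H`: the two vertices are identified
(the merged vertex keeps the label `u`); the merged vertex is adjacent to every neighbour of
`u` or `v`. -/
def contractFG (H : FG) (u v : ℕ) : FG where
  verts := H.verts \ {v}
  Adj x y := x ≠ y ∧ x ≠ v ∧ y ≠ v ∧
    (H.Adj x y ∨ (x = u ∧ u ∈ H.verts ∧ H.Adj v y) ∨ (y = u ∧ u ∈ H.verts ∧ H.Adj x v))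
  adj_sub := fun h => (SimpleGraph.top_adj _ _).mpr h.1
  edge_vert := by
    rintro x y ⟨hxy, hxv, hyv, h | ⟨rfl, hu, h⟩ | ⟨h1, h2, h3⟩⟩
    · exact ⟨H.edge_vert h, hxv⟩
    · exact ⟨hu, hxv⟩
    · exact ⟨H.edge_vert h3, hxv⟩
  symm := by
    refine ⟨?_⟩
    rintro x y ⟨hxy, hxv, hyv, h | ⟨h1, h2, h3⟩ | ⟨h1, h2, h3⟩⟩
    · exact ⟨hxy.symm, hyv, hxv, Or.inl h.symm⟩
    · exact ⟨hxy.symm, hyv, hxv, Or.inr (Or.inr ⟨h1, h2, h3.symm⟩)⟩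
    · exact ⟨hxy.symm, hyv, hxv, Or.inr (Or.inl ⟨h1, h2, h3.symm⟩)⟩

/-- The number of connected components of a graph. -/
noncomputable def ncompFG (H : FG) : ℕ := Nat.card H.coe.ConnectedComponent

/-- `C` is the vertex set of an induced cycle of `H`: it is a finite set of vertices of `H`
whose induced subgraph is connected and `2`-regular, i.e. is exactly a cycle (in particular
the cycle has no chord). -/
def IsInducedCycleFG (H : FG) (C : Set ℕ) : Prop :=
  C ⊆ H.verts ∧ C.Finite ∧ 3 ≤ C.ncard ∧ ((H.induce C).coe).Connected ∧
    ∀ x ∈ C, {y | y ∈ C ∧ H.Adj x y}.ncard = 2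

/-- The cycle with vertex set `C` is non-separating in `H`: deleting it does not increase the
number of connected components. -/
def NonSeparatingFG (H : FG) (C : Set ℕ) : Prop :=
  ncompFG (H.deleteVerts C) ≤ ncompFG H

/-- The contraction of `u` and `v` in `H` is admissible: `u` and `v` have a common neighbour
`w` such that the path `u, w, v` is part of an induced non-separating cycle of `H`. -/
def AdmissiblePair (H : FG) (u v : ℕ) : Prop :=
  u ≠ v ∧ ∃ w, H.Adj u w ∧ H.Adj w v ∧
    ∃ C : Set ℕ, u ∈ C ∧ w ∈ C ∧ v ∈ C ∧ IsInducedCycleFG H C ∧ NonSeparatingFG H C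

/-- A single bipartite-minor operation: `BStep G H` holds when `H` is obtained from `G` by
deleting a vertex, deleting an edge, or performing an admissible contraction. -/
inductive BStep : FG → FG → Prop
  | deleteVert (G : FG) (v : ℕ) : BStep G (G.deleteVerts {v})
  | deleteEdge (G : FG) (e : Sym2 ℕ) : BStep G (G.deleteEdges {e})
  | contract (G : FG) (u v : ℕ) (h : AdmissiblePair G u v) : BStep G (contractFG G u v)

/-- A single minor operation: `MStep G H` holds when `H` is obtained from `G` by deleting a
vertex, deleting an edge, or contracting an edge. -/
inductive MStep : FG → FG → Prop
  | deleteVert (G : FG) (v : ℕ) : MStep G (G.deleteVerts {v})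
  | deleteEdge (G : FG) (e : Sym2 ℕ) : MStep G (G.deleteEdges {e})
  | contract (G : FG) (u v : ℕ) (h : G.Adj u v) : MStep G (contractFG G u v)

/-- Two graphs are isomorphic. -/
def IsoFG (H K : FG) : Prop := Nonempty (H.coe ≃g K.coe)

/-- `H ≤_B G`: `H` is a bipartite minor of `G`, i.e. (a graph isomorphic to) `H` can be obtained
from `G` by a sequence of vertex deletions, edge deletions and admissible contractions. -/
def BipMinor (H G : FG) : Prop :=
  ∃ H' : FG, Relation.ReflTransGen BStep G H' ∧ IsoFG H' H

/-- `H ≤_M G`: `H` is a minor of `G`, i.e. (a graph isomorphic to) `H` can be obtained from `G`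
by a sequence of vertex deletions, edge deletions and edge contractions. -/
def MinorFG (H G : FG) : Prop :=
  ∃ H' : FG, Relation.ReflTransGen MStep G H' ∧ IsoFG H' H

/-- A graph is `2`-connected if deleting any set of at most one vertex leaves a connected
graph. -/
def TwoConnectedFG (H : FG) : Prop :=
  ∀ U : Set ℕ, U.Subsingleton → ((H.deleteVerts U).coe).Connected

/-- `B` is a block of `G`: a maximal `2`-connected subgraph of `G`. -/
def IsBlockFG (G B : FG) : Prop :=
  B ≤ G ∧ TwoConnectedFG B ∧ ∀ B' : FG, B ≤ B' → B' ≤ G → TwoConnectedFG B' → B' = B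

/-- A graph is bipartite iff it is `2`-colourable. -/
def BipartiteFG (H : FG) : Prop := H.coe.Colorable 2

/-- A forest is an acyclic graph. -/
def ForestFG (H : FG) : Prop := H.coe.IsAcyclic

/-- `H` is (isomorphic to) a subgraph of `G`. -/
def IsSubgraphFG (H G : FG) : Prop := ∃ S : FG, S ≤ G ∧ IsoFG S H

/-! ### Auxiliary development -/

open Relation

/-- Reachability inside a subgraph, as a relation on `ℕ`. -/
def Rch (K : FG) : ℕ → ℕ → Prop := Relation.ReflTransGen K.Adj

lemma Rch.refl' (K : FG) (a : ℕ) : Rch K a a := ReflTransGen.refl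

lemma Rch.trans' {K : FG} {a b c : ℕ} (h : Rch K a b) (h' : Rch K b c) : Rch K a c :=
  ReflTransGen.trans h h'

lemma Rch.symm' {K : FG} {a b : ℕ} (h : Rch K a b) : Rch K b a := by
  induction h with
  | refl => exact ReflTransGen.refl
  | tail _ hadj ih => exact ReflTransGen.trans (ReflTransGen.single hadj.symm) ih

lemma rch_mono {K L : FG} (h : ∀ a b, K.Adj a b → L.Adj a b) {a b : ℕ} (r : Rch K a b) :
    Rch L a b := by
  induction r with
  | refl => exact ReflTransGen.refl
  | tail _ hadj ih => exact ih.tail (h _ _ hadj)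

lemma rch_of_reachable {K : FG} {x y : ↥K.verts} (h : K.coe.Reachable x y) :
    Rch K x.1 y.1 := by
  obtain ⟨w⟩ := h
  induction w with
  | nil => exact ReflTransGen.refl
  | cons hadj _ ih => exact ReflTransGen.head (by exact hadj) ih

lemma reachable_of_rch {K : FG} {x y : ℕ} (hx : x ∈ K.verts) (h : Rch K x y) :
    ∀ hy : y ∈ K.verts, K.coe.Reachable ⟨x, hx⟩ ⟨y, hy⟩ := by
  induction h with
  | refl => intro hy; exact SimpleGraph.Reachable.refl _
  | @tail b c hr hadj ih =>
    intro hc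
    exact (ih (K.edge_vert hadj)).trans (SimpleGraph.Adj.reachable (by exact hadj))

/-- Bridge between `coe`-connectivity and reachability in `ℕ`. -/
lemma connected_coe_iff (K : FG) :
    K.coe.Connected ↔ K.verts.Nonempty ∧ ∀ x ∈ K.verts, ∀ y ∈ K.verts, Rch K x y := by
  constructor
  · intro h
    refine ⟨?_, fun x hx y hy => rch_of_reachable (h.preconnected ⟨x, hx⟩ ⟨y, hy⟩)⟩
    obtain ⟨⟨x, hx⟩⟩ := h.nonempty
    exact ⟨x, hx⟩
  · rintro ⟨⟨x0, hx0⟩, h⟩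
    haveI : Nonempty ↥K.verts := ⟨⟨x0, hx0⟩⟩
    exact SimpleGraph.Connected.mk (fun a b => reachable_of_rch a.2 (h a.1 a.2 b.1 b.2) b.2)

lemma adj_left_mem {K : FG} {a b : ℕ} (h : K.Adj a b) : a ∈ K.verts := K.edge_vert h
lemma adj_right_mem {K : FG} {a b : ℕ} (h : K.Adj a b) : b ∈ K.verts := K.edge_vert h.symm
lemma adj_ne {K : FG} {a b : ℕ} (h : K.Adj a b) : a ≠ b := by
  have := K.adj_sub h
  simpa using this

lemma deleteVerts_eq_self {K : FG} {U : Set ℕ} (h : ∀ x ∈ U, x ∉ K.verts) :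
    K.deleteVerts U = K := by
  ext x y
  · simp only [SimpleGraph.Subgraph.deleteVerts_verts, Set.mem_diff, and_iff_left_iff_imp]
    intro hx hxU
    exact h x hxU hx
  · simp only [SimpleGraph.Subgraph.deleteVerts_adj]
    constructor
    · rintro ⟨_, _, _, _, h⟩; exact h
    · intro hadj
      exact ⟨adj_left_mem hadj, fun hc => h _ hc (adj_left_mem hadj),
        adj_right_mem hadj, fun hc => h _ hc (adj_right_mem hadj), hadj⟩

lemma deleteEdges_eq_self {K : FG} {e : Sym2 ℕ} (h : e ∉ K.edgeSet) :
    K.deleteEdges {e} = K := by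
  ext x y
  · rfl
  · simp only [SimpleGraph.Subgraph.deleteEdges_adj, Set.mem_singleton_iff,
      and_iff_left_iff_imp]
    intro hadj hc
    exact h (by rw [← hc]; exact hadj)

lemma edgeSet_finite {K : FG} (h : K.verts.Finite) : K.edgeSet.Finite := by
  apply Set.Finite.subset ((h.prod h).image (fun p => s(p.1, p.2)))
  intro e he
  induction e with
  | _ a b =>
    rw [SimpleGraph.Subgraph.mem_edgeSet] at he
    exact ⟨(a, b), ⟨adj_left_mem he, adj_right_mem he⟩, rfl⟩

/-- Any subgraph can be reached from a supergraph by deletions. -/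
lemma steps_of_le_aux : ∀ n : ℕ, ∀ K K' : FG, K.verts.Finite → K' ≤ K →
    (K.verts \ K'.verts).ncard + (K.edgeSet \ K'.edgeSet).ncard = n →
    Relation.ReflTransGen BStep K K' := by
  intro n
  induction n using Nat.strong_induction_on with
  | _ n ih =>
  intro K K' hfin hle hm
  rcases Set.eq_empty_or_nonempty (K.verts \ K'.verts) with hv | ⟨v, hv⟩
  · rcases Set.eq_empty_or_nonempty (K.edgeSet \ K'.edgeSet) with he | ⟨e, he⟩
    · have hK : K = K' := by
        ext x y
        · constructor
          · intro hx
            by_contra hx'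
            exact (Set.eq_empty_iff_forall_notMem.mp hv x) ⟨hx, hx'⟩
          · intro hx; exact hle.1 hx
        · constructor
          · intro hadj
            have : s(x, y) ∈ K.edgeSet := hadj
            by_contra hadj'
            exact (Set.eq_empty_iff_forall_notMem.mp he (s(x,y))) ⟨this, hadj'⟩
          · intro hadj; exact hle.2 hadj
        
      rw [hK]
    · -- delete the edge e
      have hle2 : K' ≤ K.deleteEdges {e} := by
        constructor
        · intro x hx; exact hle.1 hx
        · intro x y hadj
          rw [SimpleGraph.Subgraph.deleteEdges_adj]
          refine ⟨hle.2 hadj, ?_⟩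
          simp only [Set.mem_singleton_iff]
          intro hc
          exact he.2 (by rw [← hc]; exact hadj)
      have hfin2 : (K.deleteEdges {e}).verts.Finite := by
        rw [SimpleGraph.Subgraph.deleteEdges_verts]; exact hfin
      refine Relation.ReflTransGen.head (BStep.deleteEdge K e) (ih _ ?_ _ _ hfin2 hle2 rfl)
      rw [← hm]
      have hverts : ((K.deleteEdges {e}).verts \ K'.verts) = K.verts \ K'.verts := by
        rw [SimpleGraph.Subgraph.deleteEdges_verts]
      have hedges : ((K.deleteEdges {e}).edgeSet \ K'.edgeSet) ⊂ K.edgeSet \ K'.edgeSet := by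
        constructor
        · intro f hf
          exact ⟨(SimpleGraph.Subgraph.edgeSet_mono (SimpleGraph.Subgraph.deleteEdges_le {e})) hf.1, hf.2⟩
        · intro hsub
          have : e ∈ (K.deleteEdges {e}).edgeSet \ K'.edgeSet := hsub he
          have he2 := this.1
          induction e with
          | _ a b =>
            rw [SimpleGraph.Subgraph.mem_edgeSet, SimpleGraph.Subgraph.deleteEdges_adj] at he2
            simp at he2
      rw [hverts]
      have hlt : ((K.deleteEdges {e}).edgeSet \ K'.edgeSet).ncard < (K.edgeSet \ K'.edgeSet).ncard :=
        Set.ncard_lt_ncard hedges ((edgeSet_finite hfin).subset Set.diff_subset)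
      omega
  · -- delete the vertex v
    have hle2 : K' ≤ K.deleteVerts {v} := by
      constructor
      · intro x hx
        refine ⟨hle.1 hx, ?_⟩
        simp only [Set.mem_singleton_iff]
        rintro rfl
        exact hv.2 hx
      · intro x y hadj
        rw [SimpleGraph.Subgraph.deleteVerts_adj]
        have hx : x ∈ K'.verts := adj_left_mem hadj
        have hy : y ∈ K'.verts := adj_right_mem hadj
        refine ⟨hle.1 hx, ?_, hle.1 hy, ?_, hle.2 hadj⟩ <;>
          · simp only [Set.mem_singleton_iff]; rintro rfl; exact hv.2 ‹_›
    have hfin2 : (K.deleteVerts {v}).verts.Finite := hfin.subset Set.diff_subset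
    refine Relation.ReflTransGen.head (BStep.deleteVert K v) (ih _ ?_ _ _ hfin2 hle2 rfl)
    rw [← hm]
    have hverts : ((K.deleteVerts {v}).verts \ K'.verts) ⊂ K.verts \ K'.verts := by
      constructor
      · intro x hx
        exact ⟨hx.1.1, hx.2⟩
      · intro hsub
        have : v ∈ (K.deleteVerts {v}).verts \ K'.verts := hsub hv
        simp [SimpleGraph.Subgraph.deleteVerts_verts] at this
    have hedges : ((K.deleteVerts {v}).edgeSet \ K'.edgeSet) ⊆ K.edgeSet \ K'.edgeSet := by
      intro f hf
      exact ⟨(SimpleGraph.Subgraph.edgeSet_mono (SimpleGraph.Subgraph.deleteVerts_le)) hf.1, hf.2⟩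
    have h1 : ((K.deleteVerts {v}).verts \ K'.verts).ncard < (K.verts \ K'.verts).ncard :=
      Set.ncard_lt_ncard hverts (hfin.subset Set.diff_subset)
    have h2 : ((K.deleteVerts {v}).edgeSet \ K'.edgeSet).ncard ≤ (K.edgeSet \ K'.edgeSet).ncard :=
      Set.ncard_le_ncard hedges ((edgeSet_finite hfin).subset Set.diff_subset)
    omega

lemma steps_of_le {K K' : FG} (hfin : K.verts.Finite) (hle : K' ≤ K) :
    Relation.ReflTransGen BStep K K' :=
  steps_of_le_aux _ K K' hfin hle rfl
lemma twoConn_mono_same_verts {K L : FG} (hle : K ≤ L) (hv : K.verts = L.verts)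
    (h : TwoConnectedFG K) : TwoConnectedFG L := by
  intro U hU
  have hK := h U hU
  rw [connected_coe_iff] at hK ⊢
  obtain ⟨hne, hrch⟩ := hK
  constructor
  · rwa [SimpleGraph.Subgraph.deleteVerts_verts, ← hv]
  · intro x hx y hy
    rw [SimpleGraph.Subgraph.deleteVerts_verts, ← hv] at hx hy
    refine rch_mono (fun a b hab => ?_) (hrch x hx y hy)
    rw [SimpleGraph.Subgraph.deleteVerts_adj] at hab ⊢
    exact ⟨hv ▸ hab.1, hab.2.1, hv ▸ hab.2.2.1, hab.2.2.2.1, hle.2 hab.2.2.2.2⟩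

lemma connected_transport {K L : FG} (φ : K.coe ≃g L.coe) (h : L.coe.Connected) :
    K.coe.Connected :=
  h.map φ.symm.toHom φ.symm.surjective

/-- Transport of 2-connectivity along an isomorphism of `coe`s. -/
lemma twoConn_of_iso {K L : FG} (φ : K.coe ≃g L.coe) (hL : TwoConnectedFG L) :
    TwoConnectedFG K := by
  intro U hU
  rcases hU.eq_empty_or_singleton with rfl | ⟨x, rfl⟩
  · rw [SimpleGraph.Subgraph.deleteVerts_empty]
    refine connected_transport φ ?_
    have := hL ∅ (by simp [Set.Subsingleton])
    rwa [SimpleGraph.Subgraph.deleteVerts_empty] at this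
  · by_cases hx : x ∈ K.verts
    · set x' : ↥L.verts := φ ⟨x, hx⟩ with hx'def
      have hL1 := hL {x'.1} (Set.subsingleton_singleton)
      rw [connected_coe_iff] at hL1 ⊢
      obtain ⟨hne, hrch⟩ := hL1
      have key : ∀ {A B : ↥((L.deleteVerts {x'.1}).verts)},
          (L.deleteVerts {x'.1}).coe.Walk A B →
          Rch (K.deleteVerts {x}) (φ.symm ⟨A.1, A.2.1⟩).1 (φ.symm ⟨B.1, B.2.1⟩).1 := by
        intro A B w
        induction w with
        | nil => exact ReflTransGen.refl
        | @cons A C B hadj _ ih =>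
          refine ReflTransGen.head ?_ ih
          have hadj' : (L.deleteVerts {x'.1}).Adj A.1 C.1 := hadj
          rw [SimpleGraph.Subgraph.deleteVerts_adj] at hadj'
          obtain ⟨hA, hAx, hC, hCx, hLadj⟩ := hadj'
          have hK : K.coe.Adj (φ.symm ⟨A.1, hA⟩) (φ.symm ⟨C.1, hC⟩) := by
            rw [φ.symm.map_adj_iff]
            exact hLadj
          rw [SimpleGraph.Subgraph.deleteVerts_adj]
          refine ⟨(φ.symm ⟨A.1, hA⟩).2, ?_, (φ.symm ⟨C.1, hC⟩).2, ?_, hK⟩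
          · simp only [Set.mem_singleton_iff]
            intro hc
            apply hAx
            have : φ.symm ⟨A.1, hA⟩ = (⟨x, hx⟩ : ↥K.verts) := Subtype.ext hc
            have := congrArg φ this
            rw [φ.apply_symm_apply] at this
            exact congrArg Subtype.val this
          · simp only [Set.mem_singleton_iff]
            intro hc
            apply hCx
            have : φ.symm ⟨C.1, hC⟩ = (⟨x, hx⟩ : ↥K.verts) := Subtype.ext hc
            have := congrArg φ this
            rw [φ.apply_symm_apply] at this
            exact congrArg Subtype.val this
      constructor
      · obtain ⟨b, hb⟩ := hne
        refine ⟨(φ.symm ⟨b, hb.1⟩).1, (φ.symm ⟨b, hb.1⟩).2, ?_⟩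
        simp only [Set.mem_singleton_iff]
        intro hc
        apply hb.2
        have : φ.symm ⟨b, hb.1⟩ = (⟨x, hx⟩ : ↥K.verts) := Subtype.ext hc
        have := congrArg φ this
        rw [φ.apply_symm_apply] at this
        exact congrArg Subtype.val this
      · intro a ha b hb
        rw [SimpleGraph.Subgraph.deleteVerts_verts] at ha hb
        have hA : (φ ⟨a, ha.1⟩).1 ∈ (L.deleteVerts {x'.1}).verts := by
          rw [SimpleGraph.Subgraph.deleteVerts_verts]
          refine ⟨(φ ⟨a, ha.1⟩).2, ?_⟩
          simp only [Set.mem_singleton_iff]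
          intro hc
          apply ha.2
          have : φ ⟨a, ha.1⟩ = x' := Subtype.ext hc
          have := congrArg φ.symm this
          rw [φ.symm_apply_apply, hx'def, φ.symm_apply_apply] at this
          exact congrArg Subtype.val this
        have hB : (φ ⟨b, hb.1⟩).1 ∈ (L.deleteVerts {x'.1}).verts := by
          rw [SimpleGraph.Subgraph.deleteVerts_verts]
          refine ⟨(φ ⟨b, hb.1⟩).2, ?_⟩
          simp only [Set.mem_singleton_iff]
          intro hc
          apply hb.2
          have : φ ⟨b, hb.1⟩ = x' := Subtype.ext hc
          have := congrArg φ.symm this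
          rw [φ.symm_apply_apply, hx'def, φ.symm_apply_apply] at this
          exact congrArg Subtype.val this
        have hr := hrch _ hA _ hB
        have hreach := reachable_of_rch hA hr hB
        obtain ⟨w⟩ := hreach
        have := key w
        simpa [φ.symm_apply_apply] using this
    · have heq : K.deleteVerts {x} = K := deleteVerts_eq_self (by
        intro z hz
        simp only [Set.mem_singleton_iff] at hz
        subst hz
        exact fun h => hx h)
      rw [heq]
      refine connected_transport φ ?_
      have := hL ∅ (by simp [Set.Subsingleton])
      rwa [SimpleGraph.Subgraph.deleteVerts_empty] at this
lemma subgraphs_le_finite {G : FG} (hGfin : G.verts.Finite) : {B : FG | B ≤ G}.Finite := by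
  have hinj : Function.Injective
      (fun B : FG => ((B.verts, {p : ℕ × ℕ | B.Adj p.1 p.2}) : Set ℕ × Set (ℕ × ℕ))) := by
    intro B B' h
    have h1 : B.verts = B'.verts := congrArg Prod.fst h
    have h2 : {p : ℕ × ℕ | B.Adj p.1 p.2} = {p : ℕ × ℕ | B'.Adj p.1 p.2} := congrArg Prod.snd h
    ext x y
    · rw [h1]
    · constructor
      · intro hadj; exact (Set.ext_iff.mp h2 (x, y)).mp hadj
      · intro hadj; exact (Set.ext_iff.mp h2 (x, y)).mpr hadj
  have hsub : {B : FG | B ≤ G} ⊆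
      (fun B : FG => ((B.verts, {p : ℕ × ℕ | B.Adj p.1 p.2}) : Set ℕ × Set (ℕ × ℕ))) ⁻¹'
        ({V | V ⊆ G.verts} ×ˢ {E | E ⊆ G.verts ×ˢ G.verts}) := by
    intro B hB
    refine ⟨hB.1, ?_⟩
    have hBv := hB.1
    rintro ⟨x, y⟩ hxy
    exact ⟨hBv (B.edge_vert hxy), hBv (B.edge_vert hxy.symm)⟩
  exact Set.Finite.subset (Set.Finite.preimage hinj.injOn
    ((hGfin.finite_subsets).prod ((hGfin.prod hGfin).finite_subsets))) hsub

lemma exists_block_above {G K : FG} (hGfin : G.verts.Finite) (hKG : K ≤ G)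
    (hK2 : TwoConnectedFG K) :
    ∃ B : FG, K ≤ B ∧ IsBlockFG G B ∧
      (∀ x y, B.Adj x y ↔ x ∈ B.verts ∧ y ∈ B.verts ∧ G.Adj x y) := by
  classical
  set S : Set FG := {B | K ≤ B ∧ B ≤ G ∧ TwoConnectedFG B} with hS
  have hSfin : S.Finite := (subgraphs_le_finite hGfin).subset (fun B hB => hB.2.1)
  have hSne : S.Nonempty := ⟨K, le_refl K, hKG, hK2⟩
  obtain ⟨B, hBS, hBmax⟩ := Set.Finite.exists_maximalFor id S hSfin hSne
  have hmax : ∀ B' ∈ S, B ≤ B' → B' = B := by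
    intro B' hB' hle
    exact le_antisymm (hBmax hB' hle) hle
  -- B is induced
  have hind : ∀ x y, B.Adj x y ↔ x ∈ B.verts ∧ y ∈ B.verts ∧ G.Adj x y := by
    have hBi : B ≤ G.induce B.verts := by
      constructor
      · intro x hx; exact hx
      · intro x y hadj
        exact ⟨adj_left_mem hadj, adj_right_mem hadj, hBS.2.1.2 hadj⟩
    have hiG : G.induce B.verts ≤ G := by
      constructor
      · intro x hx; exact hBS.2.1.1 hx
      · intro x y hadj; exact hadj.2.2
    have hiS : G.induce B.verts ∈ S :=
      ⟨le_trans hBS.1 hBi, hiG, twoConn_mono_same_verts hBi rfl hBS.2.2⟩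
    have := hmax _ hiS hBi
    intro x y
    constructor
    · intro hadj
      exact ⟨adj_left_mem hadj, adj_right_mem hadj, hBS.2.1.2 hadj⟩
    · intro ⟨hx, hy, hadj⟩
      rw [← this]
      exact ⟨hx, hy, hadj⟩
  refine ⟨B, hBS.1, ⟨hBS.2.1, hBS.2.2, ?_⟩, hind⟩
  intro B' hle hle' h2
  exact hmax B' ⟨le_trans hBS.1 hle, hle', h2⟩ hle

lemma ncomp_eq_one_of_connected {K : FG} (h : K.coe.Connected) : ncompFG K = 1 := by
  haveI : Nonempty K.coe.ConnectedComponent :=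
    ⟨K.coe.connectedComponentMk (Classical.choice h.nonempty)⟩
  haveI : Subsingleton K.coe.ConnectedComponent := by
    constructor
    intro a b
    refine SimpleGraph.ConnectedComponent.ind₂ (fun u v => ?_) a b
    exact SimpleGraph.ConnectedComponent.eq.mpr (h.preconnected u v)
  exact Nat.card_unique

lemma ncomp_le_one_iff {K : FG} :
    (K.verts = ∅ ∨ K.coe.Connected) → ncompFG K ≤ 1 := by
  rintro (h | h)
  · have : IsEmpty ↥K.verts := by
      rw [h]; exact Set.isEmpty_coe_sort.mpr rfl
    haveI : IsEmpty K.coe.ConnectedComponent := by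
      constructor
      intro c
      refine SimpleGraph.ConnectedComponent.ind (fun v => ?_) c
      exact this.elim v
    rw [ncompFG, Nat.card_of_isEmpty]
    omega
  · rw [ncomp_eq_one_of_connected h]

/-- The key counting lemma: if deleting `C` does not increase the number of components,
`y, z ∉ C` lie in the same component, and every vertex of `C` is connected to `y`, then
`y` and `z` remain connected after deleting `C`. -/
lemma rch_deleteVerts_of_nonsep {K : FG} (hfin : K.verts.Finite) {C : Set ℕ} {y z : ℕ}
    (hle : ncompFG (K.deleteVerts C) ≤ ncompFG K)
    (hy : y ∈ K.verts) (hyC : y ∉ C) (hz : z ∈ K.verts) (hzC : z ∉ C)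
    (hyz : Rch K y z) (hC : ∀ c ∈ C ∩ K.verts, Rch K c y) :
    Rch (K.deleteVerts C) y z := by
  classical
  by_contra hcon
  set K' := K.deleteVerts C with hK'
  haveI : Finite ↥K.verts := hfin.to_subtype
  haveI : Finite ↥K'.verts := (hfin.subset Set.diff_subset).to_subtype
  haveI : Finite K.coe.ConnectedComponent := Quot.finite _
  haveI : Finite K'.coe.ConnectedComponent := Quot.finite _
  set f : K'.coe.ConnectedComponent → K.coe.ConnectedComponent :=
    SimpleGraph.ConnectedComponent.map
      (SimpleGraph.Subgraph.inclusion (SimpleGraph.Subgraph.deleteVerts_le)) with hf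
  have hy' : y ∈ K'.verts := ⟨hy, hyC⟩
  have hz' : z ∈ K'.verts := ⟨hz, hzC⟩
  have hsurj : Function.Surjective f := by
    intro c
    refine SimpleGraph.ConnectedComponent.ind (fun p => ?_) c
    by_cases hp : p.1 ∈ C
    · refine ⟨K'.coe.connectedComponentMk ⟨y, hy'⟩, ?_⟩
      rw [hf]
      rw [SimpleGraph.ConnectedComponent.map_mk]
      apply SimpleGraph.ConnectedComponent.eq.mpr
      have : Rch K y p.1 := (hC p.1 ⟨hp, p.2⟩).symm'
      exact reachable_of_rch hy this p.2
    · refine ⟨K'.coe.connectedComponentMk ⟨p.1, ⟨p.2, hp⟩⟩, ?_⟩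
      rw [hf, SimpleGraph.ConnectedComponent.map_mk]
      rfl
  have hcard : Nat.card K'.coe.ConnectedComponent ≤ Nat.card K.coe.ConnectedComponent := hle
  have hbij : Function.Bijective f := hsurj.bijective_of_nat_card_le hcard
  have h1 : f (K'.coe.connectedComponentMk ⟨y, hy'⟩) =
      f (K'.coe.connectedComponentMk ⟨z, hz'⟩) := by
    rw [hf, SimpleGraph.ConnectedComponent.map_mk, SimpleGraph.ConnectedComponent.map_mk]
    apply SimpleGraph.ConnectedComponent.eq.mpr
    exact reachable_of_rch hy hyz hz
  have h2 := hbij.1 h1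
  have := SimpleGraph.ConnectedComponent.eq.mp h2
  exact hcon (rch_of_reachable this)
/-! ### Relabelling graphs along a permutation of `ℕ` -/

def permFG (σ : Equiv.Perm ℕ) (K : FG) : FG where
  verts := σ '' K.verts
  Adj x y := K.Adj (σ.symm x) (σ.symm y)
  adj_sub := fun h => by
    have := adj_ne h
    simp only [SimpleGraph.top_adj]
    intro hc
    exact this (by rw [hc])
  edge_vert := fun {x y} h => ⟨σ.symm x, K.edge_vert h, by simp⟩
  symm := ⟨fun x y h => h.symm⟩

lemma permFG_verts (σ : Equiv.Perm ℕ) (K : FG) : (permFG σ K).verts = σ '' K.verts := rfl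
lemma permFG_adj (σ : Equiv.Perm ℕ) (K : FG) (x y : ℕ) :
    (permFG σ K).Adj x y ↔ K.Adj (σ.symm x) (σ.symm y) := Iff.rfl

lemma contractFG_adj (H : FG) (u v x y : ℕ) :
    (contractFG H u v).Adj x y ↔ x ≠ y ∧ x ≠ v ∧ y ≠ v ∧
      (H.Adj x y ∨ (x = u ∧ u ∈ H.verts ∧ H.Adj v y) ∨ (y = u ∧ u ∈ H.verts ∧ H.Adj x v)) :=
  Iff.rfl

lemma perm_deleteVerts (σ : Equiv.Perm ℕ) (K : FG) (S : Set ℕ) :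
    permFG σ (K.deleteVerts S) = (permFG σ K).deleteVerts (σ '' S) := by
  ext x y
  · show x ∈ σ '' (K.verts \ S) ↔ _
    rw [Set.image_diff σ.injective]
    rfl
  · show (K.deleteVerts S).Adj (σ.symm x) (σ.symm y) ↔ _
    rw [SimpleGraph.Subgraph.deleteVerts_adj, SimpleGraph.Subgraph.deleteVerts_adj]
    simp only [permFG_verts, permFG_adj, Set.mem_image_equiv]

lemma perm_deleteEdges (σ : Equiv.Perm ℕ) (K : FG) (e : Sym2 ℕ) :
    permFG σ (K.deleteEdges {e}) = (permFG σ K).deleteEdges {Sym2.map σ e} := by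
  ext x y
  · rfl
  · show (K.deleteEdges {e}).Adj (σ.symm x) (σ.symm y) ↔ _
    rw [SimpleGraph.Subgraph.deleteEdges_adj, SimpleGraph.Subgraph.deleteEdges_adj]
    simp only [permFG_adj, Set.mem_singleton_iff]
    have : s(x, y) = Sym2.map σ e ↔ s(σ.symm x, σ.symm y) = e := by
      constructor
      · intro h
        apply Sym2.map.injective σ.injective
        rw [Sym2.map_pair_eq]
        simp only [Equiv.apply_symm_apply]
        exact h
      · intro h
        rw [← h, Sym2.map_pair_eq]
        simp
    rw [this]

lemma perm_contract (σ : Equiv.Perm ℕ) (K : FG) (u v : ℕ) :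
    permFG σ (contractFG K u v) = contractFG (permFG σ K) (σ u) (σ v) := by
  ext x y
  · show x ∈ σ '' (K.verts \ {v}) ↔ x ∈ σ '' K.verts \ {σ v}
    rw [Set.image_diff σ.injective, Set.image_singleton]
  · show (contractFG K u v).Adj (σ.symm x) (σ.symm y) ↔ _
    rw [contractFG_adj, contractFG_adj]
    simp only [permFG_adj, permFG_verts, ne_eq, Set.mem_image_equiv,
      Equiv.symm_apply_apply, Equiv.symm_apply_eq, Equiv.apply_eq_iff_eq]

/-- The relabelling isomorphism. -/
def permIso (σ : Equiv.Perm ℕ) (K : FG) : K.coe ≃g (permFG σ K).coe where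
  toEquiv := Equiv.image σ K.verts
  map_rel_iff' := by
    intro a b
    constructor
    · intro h
      have h' : K.Adj (σ.symm (σ a.1)) (σ.symm (σ b.1)) := h
      simpa using h'
    · intro h
      show K.Adj (σ.symm (σ a.1)) (σ.symm (σ b.1))
      simpa using h

lemma ncomp_congr {K L : FG} (φ : K.coe ≃g L.coe) : ncompFG K = ncompFG L :=
  Nat.card_congr φ.connectedComponentEquiv

lemma perm_twoConn (σ : Equiv.Perm ℕ) (K : FG) (h : TwoConnectedFG K) :
    TwoConnectedFG (permFG σ K) :=
  twoConn_of_iso (permIso σ K).symm h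

lemma perm_induce (σ : Equiv.Perm ℕ) (K : FG) (C : Set ℕ) :
    (permFG σ K).induce (σ '' C) = permFG σ (K.induce C) := by
  ext x y
  · rfl
  · show x ∈ σ '' C ∧ y ∈ σ '' C ∧ (permFG σ K).Adj x y ↔
        σ.symm x ∈ C ∧ σ.symm y ∈ C ∧ K.Adj (σ.symm x) (σ.symm y)
    rw [permFG_adj]
    simp only [Set.mem_image_equiv]

lemma perm_isInducedCycle (σ : Equiv.Perm ℕ) (K : FG) (C : Set ℕ)
    (h : IsInducedCycleFG K C) : IsInducedCycleFG (permFG σ K) (σ '' C) := by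
  obtain ⟨hsub, hfin, hcard, hconn, hdeg⟩ := h
  refine ⟨Set.image_mono hsub, hfin.image _, ?_, ?_, ?_⟩
  · rwa [Set.ncard_image_of_injective _ σ.injective]
  · rw [perm_induce]
    exact connected_transport (permIso σ (K.induce C)).symm hconn
  · rintro x ⟨x0, hx0, rfl⟩
    have : {y | y ∈ σ '' C ∧ (permFG σ K).Adj (σ x0) y} = σ '' {y | y ∈ C ∧ K.Adj x0 y} := by
      ext y
      simp only [Set.mem_setOf_eq, permFG_adj, Set.mem_image_equiv, Equiv.symm_apply_apply]
    rw [this, Set.ncard_image_of_injective _ σ.injective]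
    exact hdeg x0 hx0

lemma perm_nonSep (σ : Equiv.Perm ℕ) (K : FG) (C : Set ℕ)
    (h : NonSeparatingFG K C) : NonSeparatingFG (permFG σ K) (σ '' C) := by
  unfold NonSeparatingFG at h ⊢
  rw [← perm_deleteVerts, ← ncomp_congr (permIso σ (K.deleteVerts C)),
    ← ncomp_congr (permIso σ K)]
  exact h

lemma perm_admissible (σ : Equiv.Perm ℕ) (K : FG) (u v : ℕ)
    (h : AdmissiblePair K u v) : AdmissiblePair (permFG σ K) (σ u) (σ v) := by
  obtain ⟨hne, w, huw, hwv, C, huC, hwC, hvC, hcyc, hnonsep⟩ := h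
  refine ⟨fun hc => hne (σ.injective hc), σ w, ?_, ?_, σ '' C,
    Set.mem_image_of_mem _ huC, Set.mem_image_of_mem _ hwC, Set.mem_image_of_mem _ hvC,
    perm_isInducedCycle σ K C hcyc, perm_nonSep σ K C hnonsep⟩
  · rw [permFG_adj]; simpa using huw
  · rw [permFG_adj]; simpa using hwv

lemma perm_bstep (σ : Equiv.Perm ℕ) {K K1 : FG} (h : BStep K K1) :
    BStep (permFG σ K) (permFG σ K1) := by
  cases h with
  | deleteVert v =>
    rw [perm_deleteVerts, Set.image_singleton]
    exact BStep.deleteVert _ (σ v)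
  | deleteEdge e =>
    rw [perm_deleteEdges]
    exact BStep.deleteEdge _ (Sym2.map σ e)
  | contract u v hadm =>
    rw [perm_contract]
    exact BStep.contract _ (σ u) (σ v) (perm_admissible σ K u v hadm)

lemma perm_rtg (σ : Equiv.Perm ℕ) {K K1 : FG} (h : Relation.ReflTransGen BStep K K1) :
    Relation.ReflTransGen BStep (permFG σ K) (permFG σ K1) := by
  induction h with
  | refl => exact Relation.ReflTransGen.refl
  | tail _ hstep ih => exact ih.tail (perm_bstep σ hstep)

lemma perm_bipMinor (σ : Equiv.Perm ℕ) {K H : FG} (h : BipMinor H K) :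
    BipMinor H (permFG σ K) := by
  obtain ⟨H', hsteps, ⟨φ⟩⟩ := h
  exact ⟨permFG σ H', perm_rtg σ hsteps, ⟨((permIso σ H').symm).trans φ⟩⟩
lemma even_sum_filter (r : ℕ → ℕ → Prop) [DecidableRel r] (hsym : ∀ a b, r a b → r b a)
    (hirr : ∀ a, ¬r a a) (s : Finset ℕ) :
    Even (∑ z ∈ s, (s.filter (fun y => r z y)).card) := by
  classical
  induction s using Finset.induction_on with
  | empty => simp
  | @insert a s ha ih =>
    rw [Finset.sum_insert ha]
    have h1 : ((insert a s).filter (fun y => r a y)).card = (s.filter (fun y => r a y)).card := by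
      rw [Finset.filter_insert, if_neg (hirr a)]
    have h2 : ∀ z ∈ s, ((insert a s).filter (fun y => r z y)).card =
        (s.filter (fun y => r z y)).card + (if r z a then 1 else 0) := by
      intro z hz
      rw [Finset.filter_insert]
      by_cases hza : r z a
      · rw [if_pos hza, if_pos hza,
          Finset.card_insert_of_notMem (fun hc => ha (Finset.mem_of_mem_filter _ hc))]
      · rw [if_neg hza, if_neg hza, Nat.add_zero]
    rw [Finset.sum_congr rfl h2, Finset.sum_add_distrib]
    have h3 : (∑ z ∈ s, if r z a then 1 else 0) = (s.filter (fun z => r z a)).card :=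
      (Finset.card_filter _ _).symm
    have h4 : (s.filter (fun z => r z a)) = (s.filter (fun y => r a y)) := by
      apply Finset.filter_congr
      intro z hz
      constructor
      · intro h; exact hsym _ _ h
      · intro h; exact hsym _ _ h
    rw [h1, h3, h4]
    obtain ⟨k, hk⟩ := ih
    exact ⟨k + (s.filter (fun y => r a y)).card, by omega⟩

lemma even_cut_edges {G : FG} {C : Set ℕ} (hfin : C.Finite)
    (hdeg : ∀ z ∈ C, {y | y ∈ C ∧ G.Adj z y}.ncard = 2) {x : ℕ} (hx : x ∈ C)
    {A : Set ℕ} (hA : A ⊆ C) (hxA : x ∉ A)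
    (hclosed : ∀ z ∈ A, ∀ y, y ∈ C → G.Adj z y → y ≠ x → y ∈ A) :
    Even {z | z ∈ A ∧ G.Adj x z}.ncard := by
  classical
  have hAfin : A.Finite := hfin.subset hA
  set F := hAfin.toFinset with hF
  have hmemF : ∀ z, z ∈ F ↔ z ∈ A := fun z => hAfin.mem_toFinset
  have heven := even_sum_filter (fun p q => G.Adj p q) (fun p q h => h.symm)
    (fun p h => adj_ne h rfl) F
  have key : ∀ z ∈ F, (F.filter (fun y => G.Adj z y)).card + (if G.Adj z x then 1 else 0) = 2 := by
    intro z hz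
    have hzA : z ∈ A := (hmemF z).mp hz
    have hzC : z ∈ C := hA hzA
    have hsplit : {y | y ∈ C ∧ G.Adj z y} =
        (↑(F.filter (fun y => G.Adj z y)) : Set ℕ) ∪ {y | y = x ∧ G.Adj z y} := by
      ext y
      simp only [Set.mem_setOf_eq, Set.mem_union, Finset.coe_filter, Finset.mem_coe,
        hmemF]
      constructor
      · rintro ⟨hyC, hyadj⟩
        by_cases hyx : y = x
        · right; exact ⟨hyx, hyadj⟩
        · left; exact ⟨hclosed z hzA y hyC hyadj hyx, hyadj⟩
      · rintro (⟨hyA, hyadj⟩ | ⟨rfl, hyadj⟩)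
        · exact ⟨hA hyA, hyadj⟩
        · exact ⟨hx, hyadj⟩
    have hdisj : Disjoint (↑(F.filter (fun y => G.Adj z y)) : Set ℕ) {y | y = x ∧ G.Adj z y} := by
      rw [Set.disjoint_left]
      rintro y hy ⟨rfl, _⟩
      have : y ∈ A := (hmemF y).mp (Finset.mem_of_mem_filter _ hy)
      exact hxA this
    have h2 : {y | y = x ∧ G.Adj z y}.ncard = (if G.Adj z x then 1 else 0) := by
      by_cases h : G.Adj z x
      · rw [if_pos h]
        have : {y | y = x ∧ G.Adj z y} = {x} := by
          ext y; simp only [Set.mem_setOf_eq, Set.mem_singleton_iff]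
          constructor
          · rintro ⟨rfl, _⟩; rfl
          · rintro rfl; exact ⟨rfl, h⟩
        rw [this, Set.ncard_singleton]
      · rw [if_neg h]
        have : {y | y = x ∧ G.Adj z y} = ∅ := by
          ext y; simp only [Set.mem_setOf_eq, Set.mem_empty_iff_false, iff_false]
          rintro ⟨rfl, hc⟩; exact h hc
        rw [this, Set.ncard_empty]
    have := hdeg z hzC
    rw [hsplit, Set.ncard_union_eq hdisj (Finset.finite_toSet _)
      ((Set.finite_singleton x).subset (fun y hy => by
        rcases hy with ⟨rfl, _⟩; exact Set.mem_singleton _)),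
      Set.ncard_coe_finset] at this
    rw [← this, h2]
  have hsum : (∑ z ∈ F, (F.filter (fun y => G.Adj z y)).card) +
      (∑ z ∈ F, if G.Adj z x then 1 else 0) = 2 * F.card := by
    rw [← Finset.sum_add_distrib, Finset.sum_congr rfl key, Finset.sum_const, smul_eq_mul,
      Nat.mul_comm]
  have htarget : {z | z ∈ A ∧ G.Adj x z}.ncard = (∑ z ∈ F, if G.Adj z x then 1 else 0) := by
    have hset : {z | z ∈ A ∧ G.Adj x z} = (↑(F.filter (fun z => G.Adj z x)) : Set ℕ) := by
      ext z
      simp only [Set.mem_setOf_eq, Finset.coe_filter, Finset.mem_coe, hmemF]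
      constructor
      · rintro ⟨h1, h2⟩; exact ⟨h1, h2.symm⟩
      · rintro ⟨h1, h2⟩; exact ⟨h1, h2.symm⟩
    rw [hset, Set.ncard_coe_finset, Finset.card_filter]
  obtain ⟨k, hk⟩ := heven
  rw [htarget]
  exact ⟨F.card - k, by omega⟩
/-- Deleting one vertex from an induced cycle leaves it connected. -/
lemma cycle_delete_rch {G : FG} {C : Set ℕ} (hcyc : IsInducedCycleFG G C) (x : ℕ)
    {a b : ℕ} (ha : a ∈ C) (hax : a ≠ x) (hb : b ∈ C) (hbx : b ≠ x) :
    Rch ((G.induce C).deleteVerts {x}) a b := by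
  obtain ⟨hsub, hfin, hcard, hconn, hdeg⟩ := hcyc
  have hbridge := ((connected_coe_iff _).mp hconn).2
  by_cases hxC : x ∈ C
  swap
  · refine rch_mono (fun p q hpq => ?_) (hbridge a ha b hb)
    have hpq' : p ∈ C ∧ q ∈ C ∧ G.Adj p q := hpq
    rw [SimpleGraph.Subgraph.deleteVerts_adj]
    refine ⟨hpq'.1, ?_, hpq'.2.1, ?_, hpq⟩
    · simp only [Set.mem_singleton_iff]; rintro rfl; exact hxC hpq'.1
    · simp only [Set.mem_singleton_iff]; rintro rfl; exact hxC hpq'.2.1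
  · set D' := (G.induce C).deleteVerts {x} with hD'
    set A := {z | z ∈ C ∧ z ≠ x ∧ Rch D' a z} with hAdef
    have haA : a ∈ A := ⟨ha, hax, ReflTransGen.refl⟩
    by_contra hcon
    have hclosed : ∀ (w : ℕ), ∀ z ∈ {z | z ∈ C ∧ z ≠ x ∧ Rch D' w z}, ∀ y, y ∈ C →
        G.Adj z y → y ≠ x → y ∈ {z | z ∈ C ∧ z ≠ x ∧ Rch D' w z} := by
      rintro w z ⟨hzC, hzx, hz⟩ y hyC hadj hyx
      refine ⟨hyC, hyx, hz.tail ?_⟩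
      rw [SimpleGraph.Subgraph.deleteVerts_adj]
      exact ⟨hzC, by simp [hzx], hyC, by simp [hyx], ⟨hzC, hyC, hadj⟩⟩
    have hedge : ∀ (w : ℕ), w ∈ C → w ≠ x →
        ∃ e, e ∈ {z | z ∈ C ∧ z ≠ x ∧ Rch D' w z} ∧ G.Adj x e := by
      intro w hw hwx
      set Aw := {z | z ∈ C ∧ z ≠ x ∧ Rch D' w z} with hAw
      have haw : w ∈ Aw := ⟨hw, hwx, ReflTransGen.refl⟩
      have step : ∀ t, Rch (G.induce C) w t → (t ∈ Aw ∨ ∃ e, e ∈ Aw ∧ G.Adj x e) := by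
        intro t ht
        induction ht with
        | refl => left; exact haw
        | @tail m t hm hadj ih =>
          rcases ih with hmA | hfound
          · have hadj' : m ∈ C ∧ t ∈ C ∧ G.Adj m t := hadj
            by_cases htx : t = x
            · right
              refine ⟨m, hmA, ?_⟩
              rw [htx] at hadj'
              exact hadj'.2.2.symm
            · left; exact hclosed w m hmA t hadj'.2.1 hadj'.2.2 htx
          · right; exact hfound
      rcases step x (hbridge w hw x hxC) with hxA | h
      · exact absurd hxA.2.1 (by simp)
      · exact h
    obtain ⟨eA, heA, heAx⟩ := hedge a ha hax
    obtain ⟨eB, heB, heBx⟩ := hedge b hb hbx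
    have hdisj : ∀ z, z ∈ A → z ∈ {z | z ∈ C ∧ z ≠ x ∧ Rch D' b z} → False := by
      rintro z ⟨_, _, hza⟩ ⟨_, _, hzb⟩
      exact hcon (hza.trans' hzb.symm')
    have hevenA : Even {z | z ∈ A ∧ G.Adj x z}.ncard :=
      even_cut_edges hfin hdeg hxC (fun z hz => hz.1) (fun hxa => hxa.2.1 rfl)
        (hclosed a)
    have hevenB : Even {z | z ∈ {z | z ∈ C ∧ z ≠ x ∧ Rch D' b z} ∧ G.Adj x z}.ncard :=
      even_cut_edges hfin hdeg hxC (fun z hz => hz.1) (fun hxa => hxa.2.1 rfl)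
        (hclosed b)
    set SA := {z | z ∈ A ∧ G.Adj x z} with hSA
    set SB := {z | z ∈ {z | z ∈ C ∧ z ≠ x ∧ Rch D' b z} ∧ G.Adj x z} with hSB
    have hSAfin : SA.Finite := hfin.subset (fun z hz => hz.1.1)
    have hSBfin : SB.Finite := hfin.subset (fun z hz => hz.1.1)
    have hSApos : 0 < SA.ncard := by
      rw [Set.ncard_pos hSAfin]
      exact ⟨eA, heA, heAx⟩
    have hSBpos : 0 < SB.ncard := by
      rw [Set.ncard_pos hSBfin]
      exact ⟨eB, heB, heBx⟩
    have hSA2 : 2 ≤ SA.ncard := by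
      obtain ⟨k, hk⟩ := hevenA
      omega
    have hSB2 : 2 ≤ SB.ncard := by
      obtain ⟨k, hk⟩ := hevenB
      omega
    have hdisj2 : Disjoint SA SB := by
      rw [Set.disjoint_left]
      rintro z ⟨hz1, hz2⟩ ⟨hz3, _⟩
      exact hdisj z hz1 hz3
    have hsub2 : SA ∪ SB ⊆ {y | y ∈ C ∧ G.Adj x y} := by
      rintro z (⟨hz1, hz2⟩ | ⟨hz1, hz2⟩)
      · exact ⟨hz1.1, hz2⟩
      · exact ⟨hz1.1, hz2⟩
    have hle : (SA ∪ SB).ncard ≤ 2 := by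
      rw [← hdeg x hxC]
      exact Set.ncard_le_ncard hsub2 (hfin.subset (fun y hy => hy.1))
    rw [Set.ncard_union_eq hdisj2 hSAfin hSBfin] at hle
    omega
/-- The simple graph on `ℕ` underlying a subgraph. -/
def sg (K : FG) : SimpleGraph ℕ where
  Adj x y := K.Adj x y
  symm := ⟨fun _ _ h => h.symm⟩
  loopless := ⟨fun x h => adj_ne h rfl⟩

lemma sg_adj (K : FG) (x y : ℕ) : (sg K).Adj x y ↔ K.Adj x y := Iff.rfl

lemma rch_to_sg_reachable {K : FG} {a b : ℕ} (h : Rch K a b) : (sg K).Reachable a b := by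
  induction h with
  | refl => exact SimpleGraph.Reachable.refl _
  | tail _ hadj ih => exact ih.trans (SimpleGraph.Adj.reachable hadj)

lemma walk_support_mem {K : FG} : ∀ {a b : ℕ} (w : (sg K).Walk a b), a ∈ K.verts →
    ∀ v ∈ w.support, v ∈ K.verts := by
  intro a b w
  induction w with
  | nil =>
    intro ha v hv
    rw [SimpleGraph.Walk.support_nil, List.mem_singleton] at hv
    rwa [hv]
  | @cons a c b hadj w ih =>
    intro ha v hv
    rw [SimpleGraph.Walk.support_cons, List.mem_cons] at hv
    rcases hv with rfl | hv
    · exact ha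
    · exact ih (adj_right_mem hadj) v hv

/-- Transform a walk avoiding `x` into reachability in an induced subgraph minus `x`. -/
lemma walk_to_rch {G : FG} {C : Set ℕ} {W : Set ℕ} {x : ℕ} :
    ∀ {a b : ℕ} (w : (sg (G.deleteVerts C)).Walk a b),
    (∀ v ∈ w.support, v ∈ W) → x ∉ w.support →
    Rch ((G.induce W).deleteVerts {x}) a b := by
  intro a b w
  induction w with
  | nil => intro _ _; exact Relation.ReflTransGen.refl
  | @cons a c b hadj w ih =>
    intro hmem hx
    rw [SimpleGraph.Walk.support_cons] at hmem hx
    have hane : a ≠ x := fun hc => hx (by rw [← hc]; exact List.mem_cons_self)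
    have hcne : c ≠ x := fun hc => hx (by
      rw [← hc]
      exact List.mem_cons_of_mem _ w.start_mem_support)
    have haW : a ∈ W := hmem a (List.mem_cons_self)
    have hcW : c ∈ W := hmem c (List.mem_cons_of_mem _ w.start_mem_support)
    have hGadj : G.Adj a c := by
      have : (G.deleteVerts C).Adj a c := hadj
      rw [SimpleGraph.Subgraph.deleteVerts_adj] at this
      exact this.2.2.2.2
    refine Relation.ReflTransGen.head ?_ (ih (fun v hv => hmem v (List.mem_cons_of_mem _ hv))
      (fun hc => hx (List.mem_cons_of_mem _ hc)))
    rw [SimpleGraph.Subgraph.deleteVerts_adj]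
    refine ⟨haW, by simp [hane], hcW, by simp [hcne], ⟨haW, hcW, hGadj⟩⟩

/-- Key lemma: in a maximal 2-connected induced subgraph `B ≤ G`, two vertices of `B` outside
`C` that are joined in `G − C` are joined in `B − C`. -/
lemma block_delete_rch {G B : FG} (hGfin : G.verts.Finite) {C : Set ℕ}
    (hBle : B ≤ G)
    (hmax : ∀ B' : FG, B ≤ B' → B' ≤ G → TwoConnectedFG B' → B' = B)
    (hB2 : TwoConnectedFG B)
    (hind : ∀ x y, B.Adj x y ↔ x ∈ B.verts ∧ y ∈ B.verts ∧ G.Adj x y)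
    {y z : ℕ} (hy : y ∈ B.verts) (hyC : y ∉ C) (hz : z ∈ B.verts) (hzC : z ∉ C)
    (hrch : Rch (G.deleteVerts C) y z) :
    Rch (B.deleteVerts C) y z := by
  classical
  obtain ⟨w0⟩ := rch_to_sg_reachable hrch
  set p := w0.bypass with hp
  have hpath : p.IsPath := SimpleGraph.Walk.bypass_isPath w0
  set S : Set ℕ := {v | v ∈ p.support} with hS
  have hSsub : ∀ v ∈ S, v ∈ G.verts ∧ v ∉ C := by
    intro v hv
    have := walk_support_mem p ⟨hBle.1 hy, hyC⟩ v hv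
    exact ⟨this.1, this.2⟩
  set X := G.induce (B.verts ∪ S) with hX
  have hBX : B ≤ X := by
    constructor
    · intro v hv; exact Or.inl hv
    · intro a b hadj
      rw [hind] at hadj
      exact ⟨Or.inl hadj.1, Or.inl hadj.2.1, hadj.2.2⟩
  have hXG : X ≤ G := by
    constructor
    · rintro v (hv | hv)
      · exact hBle.1 hv
      · exact (hSsub v hv).1
    · intro a b hadj; exact hadj.2.2
  -- X is 2-connected
  have hX2 : TwoConnectedFG X := by
    have hmain : ∀ x : ℕ, ((X.deleteVerts {x}).coe).Connected := by
      intro x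
      rw [connected_coe_iff]
      have hBbridge : ∀ pp ∈ B.verts, pp ≠ x → ∀ qq ∈ B.verts, qq ≠ x →
          Rch (X.deleteVerts {x}) pp qq := by
        intro pp hpp hppx qq hqq hqqx
        have := ((connected_coe_iff _).mp (hB2 {x} Set.subsingleton_singleton)).2
        have hr := this pp ⟨hpp, by simp [hppx]⟩ qq ⟨hqq, by simp [hqqx]⟩
        refine rch_mono (fun a b hab => ?_) hr
        rw [SimpleGraph.Subgraph.deleteVerts_adj] at hab ⊢
        obtain ⟨ha, hax, hb, hbx, hadj⟩ := hab
        rw [hind] at hadj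
        exact ⟨Or.inl ha, hax, Or.inl hb, hbx, ⟨Or.inl ha, Or.inl hb, hadj.2.2⟩⟩
      -- every vertex of S reaches a vertex of B not equal to x
      have hSreach : ∀ s ∈ S, s ≠ x →
          ∃ t, t ∈ B.verts ∧ t ≠ x ∧ Rch (X.deleteVerts {x}) s t := by
        intro s hs hsx
        have hs' : s ∈ p.support := hs
        by_cases hxq : x ∈ (p.takeUntil s hs').support
        · -- use the second part of the path
          have hq2 : x ∉ (p.dropUntil s hs').support := by
            have hnodup := hpath.support_nodup
            have hsplit := SimpleGraph.Walk.take_spec p hs'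
            have : p.support = (p.takeUntil s hs').support ++
                ((p.dropUntil s hs').support.tail) := by
              rw [← SimpleGraph.Walk.support_append, hsplit]
            rw [this] at hnodup
            have hdisj := List.disjoint_of_nodup_append hnodup
            intro hc
            rw [SimpleGraph.Walk.support_eq_cons] at hc
            rcases List.mem_cons.mp hc with hc1 | hc2
            · exact hsx hc1.symm
            · exact hdisj hxq hc2
          refine ⟨z, hz, ?_, ?_⟩
          · intro hc
            apply hq2
            rw [← hc]
            exact SimpleGraph.Walk.end_mem_support _
          · refine walk_to_rch (W := B.verts ∪ S) (p.dropUntil s hs') ?_ hq2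
            intro v hv
            exact Or.inr (SimpleGraph.Walk.support_dropUntil_subset _ _ hv)
        · refine ⟨y, hy, ?_, ?_⟩
          · intro hc
            apply hxq
            rw [← hc]
            exact SimpleGraph.Walk.start_mem_support _
          · refine Rch.symm' (walk_to_rch (W := B.verts ∪ S) (p.takeUntil s hs') ?_ hxq)
            intro v hv
            exact Or.inr (SimpleGraph.Walk.support_takeUntil_subset _ _ hv)
      constructor
      · -- nonempty
        obtain ⟨t, ht⟩ := ((connected_coe_iff _).mp (hB2 {x} Set.subsingleton_singleton)).1
        exact ⟨t, Or.inl ht.1, ht.2⟩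
      · intro v hv w hw
        rw [SimpleGraph.Subgraph.deleteVerts_verts] at hv hw
        have hvx : v ≠ x := by intro hc; apply hv.2; simp [hc]
        have hwx : w ≠ x := by intro hc; apply hw.2; simp [hc]
        have hget : ∀ u, u ∈ X.verts → u ≠ x →
            ∃ t, t ∈ B.verts ∧ t ≠ x ∧ Rch (X.deleteVerts {x}) u t := by
          rintro u (hu | hu) hux
          · exact ⟨u, hu, hux, Relation.ReflTransGen.refl⟩
          · exact hSreach u hu hux
        obtain ⟨tv, htv1, htv2, htv3⟩ := hget v hv.1 hvx
        obtain ⟨tw, htw1, htw2, htw3⟩ := hget w hw.1 hwx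
        exact (htv3.trans' (hBbridge tv htv1 htv2 tw htw1 htw2)).trans' htw3.symm'
    intro U hU
    rcases hU.eq_empty_or_singleton with rfl | ⟨x, rfl⟩
    · have hXfin : X.verts.Finite := hGfin.subset hXG.1
      obtain ⟨x, hx⟩ := hXfin.infinite_compl.nonempty
      have : X.deleteVerts {x} = X := deleteVerts_eq_self (by
        intro t ht
        rw [Set.mem_singleton_iff] at ht
        rwa [ht])
      rw [SimpleGraph.Subgraph.deleteVerts_empty, ← this]
      exact hmain x
    · exact hmain x
  -- maximality
  have hXB : X = B := hmax X hBX hXG hX2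
  have hSB : S ⊆ B.verts := by
    intro v hv
    have : v ∈ X.verts := Or.inr hv
    rwa [hXB] at this
  -- conclude: walk p inside B − C
  have : ∀ {a b : ℕ} (w : (sg (G.deleteVerts C)).Walk a b),
      (∀ v ∈ w.support, v ∈ S) → Rch (B.deleteVerts C) a b := by
    intro a b w
    induction w with
    | nil => intro _; exact Relation.ReflTransGen.refl
    | @cons a c b hadj w ih =>
      intro hmem
      rw [SimpleGraph.Walk.support_cons] at hmem
      have haS : a ∈ S := hmem a (List.mem_cons_self)
      have hcS : c ∈ S := hmem c (List.mem_cons_of_mem _ w.start_mem_support)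
      have hadj' : (G.deleteVerts C).Adj a c := hadj
      rw [SimpleGraph.Subgraph.deleteVerts_adj] at hadj'
      refine Relation.ReflTransGen.head ?_ (ih (fun v hv => hmem v (List.mem_cons_of_mem _ hv)))
      rw [SimpleGraph.Subgraph.deleteVerts_adj]
      refine ⟨hSB haS, hadj'.2.1, hSB hcS, hadj'.2.2.2.1, ?_⟩
      rw [hind]
      exact ⟨hSB haS, hSB hcS, hadj'.2.2.2.2⟩
  exact this p (fun v hv => hv)
lemma rch_mono_rch {K L : FG} (h : ∀ a b, K.Adj a b → Rch L a b) {a b : ℕ} (r : Rch K a b) :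
    Rch L a b := by
  induction r with
  | refl => exact Relation.ReflTransGen.refl
  | tail _ hadj ih => exact ih.trans' (h _ _ hadj)

lemma twoConn_of_forall_delete {X : FG} (hfin : X.verts.Finite)
    (hmain : ∀ x : ℕ, ((X.deleteVerts {x}).coe).Connected) : TwoConnectedFG X := by
  intro U hU
  rcases hU.eq_empty_or_singleton with rfl | ⟨x, rfl⟩
  · obtain ⟨x, hx⟩ := hfin.infinite_compl.nonempty
    have : X.deleteVerts {x} = X := deleteVerts_eq_self (by
      intro t ht; rw [Set.mem_singleton_iff] at ht; rwa [ht])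
    rw [SimpleGraph.Subgraph.deleteVerts_empty, ← this]
    exact hmain x
  · exact hmain x

lemma bpp_twoConn {G : FG} {u v : ℕ} {C : Set ℕ} (hGfin : G.verts.Finite)
    (hcyc : IsInducedCycleFG G C) (huC : u ∈ C) (hvC : v ∈ C) (huv : u ≠ v)
    {B1 : FG} (hB1le : B1 ≤ contractFG G u v) (hB12 : TwoConnectedFG B1)
    (huB1 : u ∈ B1.verts)
    {z1 z2 : ℕ} (hz1 : B1.Adj u z1) (hvz1 : G.Adj v z1)
    (hz2 : B1.Adj u z2) (huz2 : G.Adj u z2) :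
    TwoConnectedFG (G.induce (B1.verts ∪ C)) := by
  classical
  have hCG : C ⊆ G.verts := hcyc.1
  have hB1G : B1.verts ⊆ G.verts \ {v} := hB1le.1
  set V'' : Set ℕ := B1.verts ∪ C with hV''
  set X := G.induce V'' with hXdef
  have hB1edge : ∀ a b, B1.Adj a b →
      (G.Adj a b ∨ (a = u ∧ G.Adj v b) ∨ (b = u ∧ G.Adj a v)) := by
    intro a b hab
    have := hB1le.2 hab
    rw [contractFG_adj] at this
    rcases this.2.2.2 with h | ⟨h1, _, h3⟩ | ⟨h1, _, h3⟩
    · exact Or.inl h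
    · exact Or.inr (Or.inl ⟨h1, h3⟩)
    · exact Or.inr (Or.inr ⟨h1, h3⟩)
  -- chains along the cycle avoiding x
  have hCchain : ∀ x : ℕ, ∀ a ∈ C, a ≠ x → ∀ b ∈ C, b ≠ x →
      Rch (X.deleteVerts {x}) a b := by
    intro x a ha hax b hb hbx
    refine rch_mono (fun p q hpq => ?_) (cycle_delete_rch hcyc x ha hax hb hbx)
    rw [SimpleGraph.Subgraph.deleteVerts_adj] at hpq ⊢
    obtain ⟨hp, hpx, hq, hqx, hadj⟩ := hpq
    have hp' : p ∈ C := hp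
    have hq' : q ∈ C := hq
    exact ⟨Or.inr hp', hpx, Or.inr hq', hqx, ⟨Or.inr hp', Or.inr hq', hadj.2.2⟩⟩
  -- lift B1-edges avoiding x, when x ∉ {u, v}
  have hlift : ∀ x : ℕ, x ≠ u → x ≠ v → ∀ a b, B1.Adj a b → a ≠ x → b ≠ x →
      Rch (X.deleteVerts {x}) a b := by
    intro x hxu hxv a b hab hax hbx
    have haB : a ∈ B1.verts := adj_left_mem hab
    have hbB : b ∈ B1.verts := adj_right_mem hab
    rcases hB1edge a b hab with h | ⟨hau, h⟩ | ⟨hbu, h⟩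
    · refine Relation.ReflTransGen.single ?_
      rw [SimpleGraph.Subgraph.deleteVerts_adj]
      exact ⟨Or.inl haB, by simp [hax], Or.inl hbB, by simp [hbx],
        ⟨Or.inl haB, Or.inl hbB, h⟩⟩
    · -- a = u, G.Adj v b : go along the cycle from u to v, then to b
      obtain rfl := hau.symm
      refine (hCchain x u huC (fun hc => hxu hc.symm) v hvC (fun hc => hxv hc.symm)).tail ?_
      rw [SimpleGraph.Subgraph.deleteVerts_adj]
      exact ⟨Or.inr hvC, by simp [Ne.symm hxv], Or.inl hbB, by simp [hbx],
        ⟨Or.inr hvC, Or.inl hbB, h⟩⟩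
    · -- b = u, G.Adj a v
      obtain rfl := hbu.symm
      refine Relation.ReflTransGen.head ?_
        (hCchain x v hvC (fun hc => hxv hc.symm) u huC (fun hc => hxu hc.symm))
      rw [SimpleGraph.Subgraph.deleteVerts_adj]
      exact ⟨Or.inl haB, by simp [hax], Or.inr hvC, by simp [Ne.symm hxv],
        ⟨Or.inl haB, Or.inr hvC, h⟩⟩
  -- B1-side chains avoiding some vertex m, consisting of pure G-edges only
  have hpure : ∀ m : ℕ, ∀ x : ℕ, (∀ a b, B1.Adj a b → a ≠ m → b ≠ m → G.Adj a b) →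
      (∀ t ∈ B1.verts, t ≠ m → t ≠ x) →
      ∀ s ∈ B1.verts, s ≠ m → ∀ t ∈ B1.verts, t ≠ m →
      Rch (X.deleteVerts {x}) s t := by
    intro m x hedges hne s hs hsm t ht htm
    have := ((connected_coe_iff _).mp (hB12 {m} Set.subsingleton_singleton)).2
    have hr := this s ⟨hs, by simp [hsm]⟩ t ⟨ht, by simp [htm]⟩
    refine rch_mono (fun p q hpq => ?_) hr
    rw [SimpleGraph.Subgraph.deleteVerts_adj] at hpq ⊢
    obtain ⟨hp, hpm, hq, hqm, hadj⟩ := hpq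
    rw [Set.mem_singleton_iff] at hpm hqm
    have hGpq : G.Adj p q := hedges p q hadj hpm hqm
    exact ⟨Or.inl hp, by simp [hne p hp hpm], Or.inl hq, by simp [hne q hq hqm],
      ⟨Or.inl hp, Or.inl hq, hGpq⟩⟩
  have hz1u : z1 ≠ u := fun hc => adj_ne hz1 hc.symm
  have hz2u : z2 ≠ u := fun hc => adj_ne hz2 hc.symm
  have hz1B : z1 ∈ B1.verts := adj_right_mem hz1
  have hz2B : z2 ∈ B1.verts := adj_right_mem hz2
  have hB1nov : ∀ t ∈ B1.verts, t ≠ v := fun t ht hc => (hB1G ht).2 (by rw [hc]; rfl)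
  have hB1edge_nou : ∀ a b, B1.Adj a b → a ≠ u → b ≠ u → G.Adj a b := by
    intro a b hab hau hbu
    rcases hB1edge a b hab with h | ⟨h1, _⟩ | ⟨h1, _⟩
    · exact h
    · exact absurd h1 hau
    · exact absurd h1 hbu
  apply twoConn_of_forall_delete (hGfin.subset (fun t ht => by
    rcases ht with ht | ht
    · exact (hB1G ht).1
    · exact hCG ht))
  intro x
  rw [connected_coe_iff]
  by_cases hxu : x = u
  · subst hxu
    -- hub : v
    have hhub : ∀ t ∈ X.verts, t ≠ x → Rch (X.deleteVerts {x}) t v := by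
      rintro t (ht | ht) htx
      · -- t ∈ B1.verts, t ≠ u : go inside B1 − u to z1, then edge to v
        have := hpure x x hB1edge_nou (fun s hs hsu => hsu) t ht htx z1 hz1B hz1u
        refine this.tail ?_
        rw [SimpleGraph.Subgraph.deleteVerts_adj]
        exact ⟨Or.inl hz1B, by simp [hz1u], Or.inr hvC, by simp [Ne.symm huv],
          ⟨Or.inl hz1B, Or.inr hvC, hvz1.symm⟩⟩
      · exact hCchain x t ht htx v hvC (Ne.symm huv)
    refine ⟨⟨v, ?_⟩, ?_⟩
    · rw [SimpleGraph.Subgraph.deleteVerts_verts]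
      exact ⟨Or.inr hvC, by simp [Ne.symm huv]⟩
    · intro s hs t ht
      rw [SimpleGraph.Subgraph.deleteVerts_verts] at hs ht
      have hsx : s ≠ x := by intro hc; apply hs.2; simp [hc]
      have htx : t ≠ x := by intro hc; apply ht.2; simp [hc]
      exact (hhub s hs.1 hsx).trans' (hhub t ht.1 htx).symm'
  · by_cases hxv : x = v
    · subst hxv
      -- hub : u ; B1 vertices other than u go inside B1 − u to z2, then edge to u
      have hhub : ∀ t ∈ X.verts, t ≠ x → Rch (X.deleteVerts {x}) t u := by
        rintro t (ht | ht) htx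
        · by_cases htu : t = u
          · subst htu; exact Relation.ReflTransGen.refl
          · have := hpure u x hB1edge_nou (fun s hs hsu => hB1nov s hs) t ht htu z2 hz2B hz2u
            refine this.tail ?_
            rw [SimpleGraph.Subgraph.deleteVerts_adj]
            exact ⟨Or.inl hz2B, by simp [hB1nov z2 hz2B], Or.inl huB1, by simp [huv],
              ⟨Or.inl hz2B, Or.inl huB1, huz2.symm⟩⟩
        · exact hCchain x t ht htx u huC huv
      refine ⟨⟨u, ?_⟩, ?_⟩
      · rw [SimpleGraph.Subgraph.deleteVerts_verts]
        exact ⟨Or.inl huB1, by simp [huv]⟩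
      · intro s hs t ht
        rw [SimpleGraph.Subgraph.deleteVerts_verts] at hs ht
        have hsx : s ≠ x := by intro hc; apply hs.2; simp [hc]
        have htx : t ≠ x := by intro hc; apply ht.2; simp [hc]
        exact (hhub s hs.1 hsx).trans' (hhub t ht.1 htx).symm'
    · -- x ∉ {u, v} : hub u
      have hhub : ∀ t ∈ X.verts, t ≠ x → Rch (X.deleteVerts {x}) t u := by
        rintro t (ht | ht) htx
        · -- chain in B1 − x, lifted via hlift
          have := ((connected_coe_iff _).mp (hB12 {x} Set.subsingleton_singleton)).2
          have hr := this t ⟨ht, by simp [htx]⟩ u ⟨huB1, by simp [Ne.symm hxu]⟩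
          refine rch_mono_rch (fun p q hpq => ?_) hr
          rw [SimpleGraph.Subgraph.deleteVerts_adj] at hpq
          obtain ⟨hp, hpx, hq, hqx, hadj⟩ := hpq
          rw [Set.mem_singleton_iff] at hpx hqx
          exact hlift x hxu hxv p q hadj hpx hqx
        · exact hCchain x t ht htx u huC (Ne.symm hxu)
      refine ⟨⟨u, ?_⟩, ?_⟩
      · rw [SimpleGraph.Subgraph.deleteVerts_verts]
        exact ⟨Or.inl huB1, by simp [Ne.symm hxu]⟩
      · intro s hs t ht
        rw [SimpleGraph.Subgraph.deleteVerts_verts] at hs ht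
        have hsx : s ≠ x := by intro hc; apply hs.2; simp [hc]
        have htx : t ≠ x := by intro hc; apply ht.2; simp [hc]
        exact (hhub s hs.1 hsx).trans' (hhub t ht.1 htx).symm'
lemma bipminor_trans_steps {H K K' : FG} (h : BipMinor H K)
    (hsteps : Relation.ReflTransGen BStep K' K) : BipMinor H K' := by
  obtain ⟨H'', s, iso⟩ := h
  exact ⟨H'', hsteps.trans s, iso⟩

lemma main_aux {H : FG} (hH2 : TwoConnectedFG H) {G H' : FG}
    (hsteps : Relation.ReflTransGen BStep G H') :
    G.verts.Finite → IsoFG H' H → ∃ B : FG, IsBlockFG G B ∧ BipMinor H B := by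
  induction hsteps using Relation.ReflTransGen.head_induction_on with
  | refl =>
    intro hfin hiso
    obtain ⟨φ⟩ := hiso
    have h2 : TwoConnectedFG H' := twoConn_of_iso φ hH2
    exact ⟨H', ⟨le_refl _, h2, fun B' h1 h2' _ => le_antisymm h2' h1⟩,
      ⟨H', Relation.ReflTransGen.refl, ⟨φ⟩⟩⟩
  | @head G Gm hstep hrest ih =>
    intro hfin hiso
    have hfinm : Gm.verts.Finite := by
      cases hstep with
      | deleteVert v => exact hfin.subset Set.diff_subset
      | deleteEdge e => exact hfin
      | contract u v h => exact hfin.subset Set.diff_subset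
    obtain ⟨B1, hB1block, hB1minor⟩ := ih hfinm hiso
    have finish : ∀ B1 : FG, B1 ≤ G → TwoConnectedFG B1 → BipMinor H B1 →
        ∃ B : FG, IsBlockFG G B ∧ BipMinor H B := by
      intro B1 hle h2 hmin
      obtain ⟨B, hB1B, hBblock, _⟩ := exists_block_above hfin hle h2
      exact ⟨B, hBblock,
        bipminor_trans_steps hmin (steps_of_le (hfin.subset hBblock.1.1) hB1B)⟩
    cases hstep with
    | deleteVert v =>
      exact finish B1 (le_trans hB1block.1 SimpleGraph.Subgraph.deleteVerts_le)
        hB1block.2.1 hB1minor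
    | deleteEdge e =>
      exact finish B1 (le_trans hB1block.1 (SimpleGraph.Subgraph.deleteEdges_le _))
        hB1block.2.1 hB1minor
    | contract u v hadm =>
      obtain ⟨huv, w, huw, hwv, C, huC, hwC, hvC, hcyc, hnonsep⟩ := hadm
      have hB1le : B1 ≤ contractFG G u v := hB1block.1
      have hB12 : TwoConnectedFG B1 := hB1block.2.1
      have hCG : C ⊆ G.verts := hcyc.1
      have hB1sub : B1.verts ⊆ G.verts \ {v} := hB1le.1
      have hB1edge : ∀ a b, B1.Adj a b → a ≠ b ∧
          (G.Adj a b ∨ (a = u ∧ G.Adj v b) ∨ (b = u ∧ G.Adj a v)) := by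
        intro a b hab
        have := hB1le.2 hab
        rw [contractFG_adj] at this
        refine ⟨this.1, ?_⟩
        rcases this.2.2.2 with h | ⟨h1, _, h3⟩ | ⟨h1, _, h3⟩
        · exact Or.inl h
        · exact Or.inr (Or.inl ⟨h1, h3⟩)
        · exact Or.inr (Or.inr ⟨h1, h3⟩)
      by_cases hA : ∀ z, B1.Adj u z → G.Adj u z
      · -- all edges at the contracted vertex come from u : B1 is a subgraph of G
        have hB1G : B1 ≤ G := by
          constructor
          · intro t ht; exact (hB1sub ht).1
          · intro a b hab
            rcases (hB1edge a b hab).2 with h | ⟨h1, h3⟩ | ⟨h1, h3⟩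
            · exact h
            · rw [h1] at hab ⊢
              exact hA b hab
            · rw [h1] at hab ⊢
              exact (hA a hab.symm).symm
        exact finish B1 hB1G hB12 hB1minor
      · push_neg at hA
        obtain ⟨z1, hz1adj, hz1nu⟩ := hA
        have huB1 : u ∈ B1.verts := adj_left_mem hz1adj
        have hvz1 : G.Adj v z1 := by
          rcases (hB1edge u z1 hz1adj).2 with h | ⟨_, h3⟩ | ⟨h1, h3⟩
          · exact absurd h hz1nu
          · exact h3
          · exact absurd h1 (fun hc => (hB1edge u z1 hz1adj).1 hc.symm)
        by_cases hA' : ∀ z, B1.Adj u z → G.Adj v z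
        · -- all edges at the contracted vertex come from v : relabel u ↦ v
          set σ : Equiv.Perm ℕ := Equiv.swap u v with hσ
          have hσs : σ.symm = σ := Equiv.symm_swap u v
          set B1' := permFG σ B1 with hB1'
          have hB1'G : B1' ≤ G := by
            constructor
            · rintro t ⟨s, hs, rfl⟩
              by_cases hsu : s = u
              · rw [hsu]
                have : σ u = v := Equiv.swap_apply_left u v
                rw [this]
                exact hCG hvC
              · have hsv : s ≠ v := fun hc => (hB1sub hs).2 (by rw [hc]; rfl)
                have : σ s = s := Equiv.swap_apply_of_ne_of_ne hsu hsv
                rw [this]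
                exact (hB1sub hs).1
            · intro a b hab
              have hab' : B1.Adj (σ.symm a) (σ.symm b) := hab
              set a0 := σ.symm a with ha0
              set b0 := σ.symm b with hb0
              have haa : a = σ a0 := by rw [ha0]; simp
              have hbb : b = σ b0 := by rw [hb0]; simp
              have ha0B : a0 ∈ B1.verts := adj_left_mem hab'
              have hb0B : b0 ∈ B1.verts := adj_right_mem hab'
              have ha0v : a0 ≠ v := fun hc => (hB1sub ha0B).2 (by rw [hc]; rfl)
              have hb0v : b0 ≠ v := fun hc => (hB1sub hb0B).2 (by rw [hc]; rfl)
              by_cases ha0u : a0 = u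
              · have hb0u : b0 ≠ u := fun hc =>
                  (hB1edge a0 b0 hab').1 (by rw [ha0u, hc])
                have h1 : σ a0 = v := by rw [ha0u]; exact Equiv.swap_apply_left u v
                have h2 : σ b0 = b0 := Equiv.swap_apply_of_ne_of_ne hb0u hb0v
                rw [haa, hbb, h1, h2]
                refine hA' b0 ?_
                rw [← ha0u]; exact hab'
              · by_cases hb0u : b0 = u
                · have h1 : σ b0 = v := by rw [hb0u]; exact Equiv.swap_apply_left u v
                  have h2 : σ a0 = a0 := Equiv.swap_apply_of_ne_of_ne ha0u ha0v
                  rw [haa, hbb, h1, h2]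
                  refine (hA' a0 ?_).symm
                  rw [← hb0u]; exact hab'.symm
                · have h1 : σ a0 = a0 := Equiv.swap_apply_of_ne_of_ne ha0u ha0v
                  have h2 : σ b0 = b0 := Equiv.swap_apply_of_ne_of_ne hb0u hb0v
                  rw [haa, hbb, h1, h2]
                  rcases (hB1edge a0 b0 hab').2 with h | ⟨hc, _⟩ | ⟨hc, _⟩
                  · exact h
                  · exact absurd hc ha0u
                  · exact absurd hc hb0u
          exact finish B1' hB1'G (perm_twoConn σ B1 hB12) (perm_bipMinor σ hB1minor)
        · -- the genuinely mixed case
          push_neg at hA'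
          obtain ⟨z2, hz2adj, hz2nv⟩ := hA'
          have huz2 : G.Adj u z2 := by
            rcases (hB1edge u z2 hz2adj).2 with h | ⟨_, h3⟩ | ⟨h1, h3⟩
            · exact h
            · exact absurd h3 hz2nv
            · exact absurd h1 (fun hc => (hB1edge u z2 hz2adj).1 hc.symm)
          have hB''2 : TwoConnectedFG (G.induce (B1.verts ∪ C)) :=
            bpp_twoConn hfin hcyc huC hvC huv hB1le hB12 huB1 hz1adj hvz1 hz2adj huz2
          have hB''G : G.induce (B1.verts ∪ C) ≤ G := by
            constructor
            · rintro t (ht | ht)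
              · exact (hB1sub ht).1
              · exact hCG ht
            · intro a b hab; exact hab.2.2
          obtain ⟨B, hB''B, hBblock, hBind⟩ := exists_block_above hfin hB''G hB''2
          have hCB : C ⊆ B.verts := fun c hc => hB''B.1 (Or.inr hc)
          have hB1B : B1.verts ⊆ B.verts := fun c hc => hB''B.1 (Or.inl hc)
          have hBG : B ≤ G := hBblock.1
          have hB2 : TwoConnectedFG B := hBblock.2.1
          have hBconn : B.coe.Connected := by
            have := hB2 ∅ (by simp [Set.Subsingleton])
            rwa [SimpleGraph.Subgraph.deleteVerts_empty] at this
          -- the pair (u, v) is admissible in B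
          have hadmB : AdmissiblePair B u v := by
            refine ⟨huv, w, ?_, ?_, C, huC, hwC, hvC, ?_, ?_⟩
            · exact (hBind u w).mpr ⟨hCB huC, hCB hwC, huw⟩
            · exact (hBind w v).mpr ⟨hCB hwC, hCB hvC, hwv⟩
            · -- induced cycle in B
              obtain ⟨hsub', hfin', hcard', hconn', hdeg'⟩ := hcyc
              refine ⟨hCB, hfin', hcard', ?_, ?_⟩
              · have heq : B.induce C = G.induce C := by
                  ext a b
                  · exact Iff.rfl
                  · show a ∈ C ∧ b ∈ C ∧ B.Adj a b ↔ a ∈ C ∧ b ∈ C ∧ G.Adj a b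
                    constructor
                    · rintro ⟨h1, h2, h3⟩
                      exact ⟨h1, h2, ((hBind a b).mp h3).2.2⟩
                    · rintro ⟨h1, h2, h3⟩
                      exact ⟨h1, h2, (hBind a b).mpr ⟨hCB h1, hCB h2, h3⟩⟩
                rw [heq]
                exact hconn'
              · intro a ha
                have heq : {y | y ∈ C ∧ B.Adj a y} = {y | y ∈ C ∧ G.Adj a y} := by
                  ext y
                  constructor
                  · rintro ⟨h1, h2⟩
                    exact ⟨h1, ((hBind a y).mp h2).2.2⟩
                  · rintro ⟨h1, h2⟩
                    exact ⟨h1, (hBind a y).mpr ⟨hCB ha, hCB h1, h2⟩⟩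
                rw [heq]
                exact hdeg' a ha
            · -- C is non-separating in B
              show ncompFG (B.deleteVerts C) ≤ ncompFG B
              rw [ncomp_eq_one_of_connected hBconn]
              apply ncomp_le_one_iff
              by_cases hempty : ∀ t ∈ B.verts, t ∈ C
              · left
                rw [SimpleGraph.Subgraph.deleteVerts_verts]
                ext t
                simp only [Set.mem_diff, Set.mem_empty_iff_false, iff_false, not_and, not_not]
                exact fun ht => hempty t ht
              · right
                push_neg at hempty
                obtain ⟨y0, hy0B, hy0C⟩ := hempty
                rw [connected_coe_iff]
                constructor
                · exact ⟨y0, hy0B, hy0C⟩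
                · intro p hp q hq
                  rw [SimpleGraph.Subgraph.deleteVerts_verts] at hp hq
                  have hGBridge := ((connected_coe_iff B).mp hBconn).2
                  have hrchG : Rch (G.deleteVerts C) p q := by
                    refine rch_deleteVerts_of_nonsep hfin hnonsep (hBG.1 hp.1) hp.2
                      (hBG.1 hq.1) hq.2 ?_ ?_
                    · exact rch_mono (fun a b hab => hBG.2 hab) (hGBridge p hp.1 q hq.1)
                    · intro c hc
                      exact rch_mono (fun a b hab => hBG.2 hab)
                        (hGBridge c (hCB hc.1) p hp.1)
                  exact block_delete_rch hfin hBG hBblock.2.2 hB2 hBind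
                    hp.1 hp.2 hq.1 hq.2 hrchG
          -- conclude
          have hstepB : BStep B (contractFG B u v) := BStep.contract B u v hadmB
          have hB1c : B1 ≤ contractFG B u v := by
            constructor
            · intro t ht
              exact ⟨hB1B ht, (hB1sub ht).2⟩
            · intro a b hab
              have haB1 : a ∈ B1.verts := adj_left_mem hab
              have hbB1 : b ∈ B1.verts := adj_right_mem hab
              rw [contractFG_adj]
              refine ⟨(hB1edge a b hab).1, fun hc => (hB1sub haB1).2 (by rw [hc]; rfl),
                fun hc => (hB1sub hbB1).2 (by rw [hc]; rfl), ?_⟩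
              rcases (hB1edge a b hab).2 with h | ⟨h1, h3⟩ | ⟨h1, h3⟩
              · exact Or.inl ((hBind a b).mpr ⟨hB1B haB1, hB1B hbB1, h⟩)
              · exact Or.inr (Or.inl ⟨h1, hB1B huB1,
                  (hBind v b).mpr ⟨hCB hvC, hB1B hbB1, h3⟩⟩)
              · exact Or.inr (Or.inr ⟨h1, hB1B huB1,
                  (hBind a v).mpr ⟨hB1B haB1, hCB hvC, h3⟩⟩)
          have hfinc : (contractFG B u v).verts.Finite :=
            (hfin.subset hBG.1).subset Set.diff_subset
          refine ⟨B, hBblock, bipminor_trans_steps hB1minor ?_⟩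
          exact Relation.ReflTransGen.head hstepB (steps_of_le hfinc hB1c)

/-- If `H` is a `2`-connected graph that is a bipartite minor of a (finite)
graph `G`, then `H` is a bipartite minor of some block of `G`. -/
theorem bipMinor_block_of_twoConnected (G H : FG) (hGfin : G.verts.Finite)
    (hH2 : TwoConnectedFG H) (hHG : BipMinor H G) :
    ∃ B : FG, IsBlockFG G B ∧ BipMinor H B := by
  obtain ⟨H', hsteps, hiso⟩ := hHG
  exact main_aux hH2 hsteps hGfin hiso
end

section
/- The bipartite minor relation is not a well-quasi-order on the class of all bipartite graphs: there exists an infinite sequence of bipartite graphs (in fact, of forests) G_1, G_2, … such that for no pair of indices i < j does G_i ≤_B G_j hold. -/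
open SimpleGraph

lemma exists_first_edge {V : Type*} {G : SimpleGraph V} {u v : V} (w : G.Walk u v) (h : u ≠ v) :
    ∃ b, G.Adj u b ∧ s(u,b) ∈ w.edges ∧ b ∈ w.support := by
  cases w with
  | nil => exact absurd rfl h
  | cons h' w' => exact ⟨_, h', by simp, by simp⟩

lemma no_cycle_at_max (G : SimpleGraph ℕ) (p : ℕ → ℕ)
    (h : ∀ u v, G.Adj u v → (u = p v ∧ u < v) ∨ (v = p u ∧ v < u))
    (m : ℕ) (c' : G.Walk m m) (hc' : c'.IsCycle) (hle' : ∀ x ∈ c'.support, x ≤ m) : False := by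
  cases c' with
  | nil => exact hc'.ne_nil rfl
  | @cons _ s _ hadj q =>
    have hq := (Walk.cons_isCycle_iff q hadj).mp hc'
    have hsm : s = p m := by
      rcases h m s hadj with ⟨h1, h2⟩ | ⟨h1, h2⟩
      · exact absurd h2 (not_lt.mpr (hle' s (by simp)))
      · exact h1
    obtain ⟨b, hb1, hb2, hb3⟩ := exists_first_edge q.reverse (fun he => (h m s hadj).elim
      (fun h' => absurd h'.2 (not_lt.mpr (hle' s (by simp))))
      (fun h' => by omega))
    have hbm : b = p m := by
      rcases h m b hb1 with ⟨h1, h2⟩ | ⟨h1, h2⟩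
      · have : b ∈ q.support := by simpa using hb3
        exact absurd h2 (not_lt.mpr (hle' b (by simp [this])))
      · exact h1
    have : s(m, s) ∈ q.edges := by
      have : s(m, b) ∈ q.edges := by simpa using hb2
      rwa [hbm, ← hsm] at this
    exact hq.2 this

lemma acyclic_parent (G : SimpleGraph ℕ) (p : ℕ → ℕ)
    (h : ∀ u v, G.Adj u v → (u = p v ∧ u < v) ∨ (v = p u ∧ v < u)) : G.IsAcyclic := by
  intro v c hc
  have hne : c.support.toFinset.Nonempty := ⟨v, by simp [c.start_mem_support]⟩
  obtain ⟨m, hmmem, hle⟩ : ∃ m, m ∈ c.support ∧ ∀ x ∈ c.support, x ≤ m :=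
    ⟨c.support.toFinset.max' hne, by simpa using c.support.toFinset.max'_mem hne,
      fun x hx => c.support.toFinset.le_max' x (by simpa using hx)⟩
  refine no_cycle_at_max G p h m (c.rotate m hmmem) (hc.rotate hmmem) ?_
  intro x hx
  rw [Walk.support_eq_cons] at hx
  rcases List.mem_cons.mp hx with rfl | hx'
  · exact le_rfl
  · exact hle x (List.mem_of_mem_tail ((c.support_rotate m hmmem).mem_iff.mp hx'))
open SimpleGraph

lemma treeFG_adj {l x y : ℕ} : (treeFG l).Adj x y ↔
    x ≠ y ∧ x < l + 5 ∧ y < l + 5 ∧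
      (((y = x + 1 ∧ y ≤ l) ∨ (x = 0 ∧ (y = l + 1 ∨ y = l + 2)) ∨
        (x = l ∧ (y = l + 3 ∨ y = l + 4))) ∨
       ((x = y + 1 ∧ x ≤ l) ∨ (y = 0 ∧ (x = l + 1 ∨ x = l + 2)) ∨
        (y = l ∧ (x = l + 3 ∨ x = l + 4)))) := Iff.rfl

-- the parent spec for treeFG
lemma treeFG_parent (l : ℕ) : ∀ u v, (treeFG l).spanningCoe.Adj u v →
    (u = (fun x => if x ≤ l then x - 1 else if x ≤ l + 2 then 0 else l) v ∧ u < v) ∨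
    (v = (fun x => if x ≤ l then x - 1 else if x ≤ l + 2 then 0 else l) u ∧ v < u) := by
  intro u v h
  rw [Subgraph.spanningCoe_adj, treeFG_adj] at h
  simp only
  split_ifs <;> omega

lemma treeFG_deg3 {l x y1 y2 y3 : ℕ} (h1 : (treeFG l).Adj x y1) (h2 : (treeFG l).Adj x y2)
    (h3 : (treeFG l).Adj x y3) (d12 : y1 ≠ y2) (d13 : y1 ≠ y3) (d23 : y2 ≠ y3) :
    x = 0 ∨ x = l := by
  rw [treeFG_adj] at h1 h2 h3
  omega

lemma walk_length_lb {G : SimpleGraph ℕ} (f : ℕ → ℕ)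
    (hf : ∀ u v, G.Adj u v → f v ≤ f u + 1) :
    ∀ {u v : ℕ} (w : G.Walk u v), f v ≤ f u + w.length := by
  intro u v w
  induction w with
  | nil => simp
  | cons h q ih =>
    have := hf _ _ h
    simp only [Walk.length_cons]
    omega

lemma treeFG_pot (l : ℕ) : ∀ u v, (treeFG l).spanningCoe.Adj u v →
    (fun x => if x ≤ l then x else if x ≤ l + 2 then 0 else l) v ≤
    (fun x => if x ≤ l then x else if x ≤ l + 2 then 0 else l) u + 1 := by
  intro u v h
  rw [Subgraph.spanningCoe_adj, treeFG_adj] at h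
  simp only
  split_ifs <;> omega

lemma treeFG_walk_lb {l : ℕ} (w : (treeFG l).spanningCoe.Walk 0 l) : l ≤ w.length := by
  have := walk_length_lb _ (treeFG_pot l) w
  split_ifs at this <;> omega

lemma acyclic_of_injHom {V W : Type*} {G : SimpleGraph V} {H : SimpleGraph W}
    (f : G →g H) (hf : Function.Injective f) (h : H.IsAcyclic) : G.IsAcyclic :=
  fun _ c hc => h (c.map f) (hc.map hf)

lemma treeFG_spanning_acyclic (l : ℕ) : (treeFG l).spanningCoe.IsAcyclic :=
  acyclic_parent _ _ (treeFG_parent l)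

-- spine walk of length k from l-k to l in coe
lemma treeFG_spine (l : ℕ) : ∀ k, k ≤ l → ∀ (h1 : l - k ∈ (treeFG l).verts)
    (h2 : l ∈ (treeFG l).verts),
    ∃ w : ((treeFG l).coe).Walk ⟨l - k, h1⟩ ⟨l, h2⟩, w.length = k := by
  intro k
  induction k with
  | zero =>
    intro hk h1 h2
    have : (⟨l, h2⟩ : (treeFG l).verts) = ⟨l - 0, h1⟩ := by
      ext; simp
    exact ⟨Walk.nil.copy this rfl, by simp⟩
  | succ k ih =>
    intro hk h1 h2
    have hmem : l - k ∈ (treeFG l).verts := by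
      simp only [treeFG, ofRel]; exact Set.mem_setOf_eq ▸ (by omega)
    obtain ⟨w, hw⟩ := ih (by omega) hmem h2
    have hadj : ((treeFG l).coe).Adj ⟨l - (k+1), h1⟩ ⟨l - k, hmem⟩ := by
      show (treeFG l).Adj (l - (k+1)) (l - k)
      rw [treeFG_adj]
      omega
    exact ⟨Walk.cons hadj w, by simp [hw]⟩

lemma treeFG_verts {l : ℕ} : (treeFG l).verts = {x | x < l + 5} := rfl

def valHom (H : FG) : H.coe →g H.spanningCoe where
  toFun := Subtype.val
  map_rel' h := h

def leHom {J : ℕ} {H' : FG} (hle : H' ≤ treeFG J) : H'.coe →g (treeFG J).spanningCoe where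
  toFun := Subtype.val
  map_rel' h := hle.2 h

def inducedHom {J : ℕ} {K : FG} (hK : K ≤ treeFG J) (C : Set ℕ) :
    ((K.induce C).coe) →g (treeFG J).spanningCoe where
  toFun := Subtype.val
  map_rel' h := hK.2 h.2.2

lemma treeFG_coe_acyclic (l : ℕ) : ((treeFG l).coe).IsAcyclic :=
  acyclic_of_injHom (valHom _) Subtype.val_injective (treeFG_spanning_acyclic l)

lemma treeFG_colorable (l : ℕ) : ((treeFG l).coe).Colorable 2 := by
  have c : ((treeFG l).coe).Coloring (Fin 2) := by
    refine Coloring.mk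
      (fun v => ⟨if (v : ℕ) ≤ l then (v : ℕ) % 2 else if (v : ℕ) ≤ l + 2 then 1 else (l+1) % 2,
        by split_ifs <;> omega⟩) ?_
    intro a b hab
    have h : (treeFG l).Adj ↑a ↑b := hab
    rw [treeFG_adj] at h
    simp only [ne_eq, Fin.mk.injEq]
    split_ifs <;> omega
  simpa using c.colorable

lemma no_induced_cycle {J : ℕ} {K : FG} (hK : K ≤ treeFG J) {C : Set ℕ}
    (h : IsInducedCycleFG K C) : False := by
  obtain ⟨hsub, hfin, hcard, hconn, hreg⟩ := h
  haveI : Fintype ↥(K.induce C).verts := hfin.fintype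
  set M := ((K.induce C).coe) with hM
  haveI : DecidableRel M.Adj := Classical.decRel _
  have hac : M.IsAcyclic :=
    acyclic_of_injHom (inducedHom hK C) Subtype.val_injective (treeFG_spanning_acyclic J)
  have htree : M.IsTree := ⟨hconn, hac⟩
  have hE : M.edgeFinset.card + 1 = Fintype.card ↥(K.induce C).verts := htree.card_edgeFinset
  have hdeg : ∀ v : ↥(K.induce C).verts, M.degree v = 2 := by
    intro v
    have h2 := hreg ↑v v.2
    have himg : Subtype.val '' (M.neighborSet v) = {y | y ∈ C ∧ K.Adj ↑v y} := by
      ext z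
      constructor
      · rintro ⟨y, hy, rfl⟩
        exact ⟨y.2, hy.2.2⟩
      · rintro ⟨hz, hadj⟩
        exact ⟨⟨z, hz⟩, ⟨v.2, hz, hadj⟩, rfl⟩
    have : (M.neighborSet v).ncard = 2 := by
      rw [← Set.ncard_image_of_injective _ Subtype.val_injective, himg]
      exact h2
    rwa [Set.ncard_eq_toFinset_card', Set.toFinset_card, card_neighborSet_eq_degree] at this
  have hsum := M.sum_degrees_eq_twice_card_edges
  rw [Finset.sum_congr rfl (fun v _ => hdeg v)] at hsum
  simp only [Finset.sum_const, Finset.card_univ, smul_eq_mul] at hsum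
  rw [← Nat.card_eq_fintype_card] at hE hsum
  omega

lemma bstep_le {J : ℕ} {K H : FG} (hK : K ≤ treeFG J) (h : BStep K H) : H ≤ treeFG J := by
  cases h with
  | deleteVert v => exact le_trans (Subgraph.deleteVerts_le) hK
  | deleteEdge e => exact le_trans (Subgraph.deleteEdges_le _) hK
  | contract u v hadm =>
    obtain ⟨-, w, -, -, C, -, -, -, hC, -⟩ := hadm
    exact absurd hC (fun hC => no_induced_cycle hK hC)

lemma chain_le {J : ℕ} {H : FG} (h : Relation.ReflTransGen BStep (treeFG J) H) :
    H ≤ treeFG J := by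
  induction h with
  | refl => exact le_rfl
  | tail _ hstep ih => exact bstep_le ih hstep

lemma not_embed {I J : ℕ} (hI : 1 ≤ I) (hIJ : I < J) {H' : FG} (hle : H' ≤ treeFG J)
    (φ : H'.coe ≃g (treeFG I).coe) : False := by
  have mem : ∀ x, x < I + 5 → x ∈ (treeFG I).verts := fun x hx => hx
  set ψ := φ.symm with hψ
  set a : ↥H'.verts := ψ ⟨0, mem 0 (by omega)⟩ with ha
  set b : ↥H'.verts := ψ ⟨I, mem I (by omega)⟩ with hb
  have key : ∀ (x y : ↥(treeFG I).verts), ((treeFG I).coe).Adj x y →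
      (treeFG J).Adj ↑(ψ x) ↑(ψ y) := by
    intro x y hxy
    have : (H'.coe).Adj (ψ x) (ψ y) := ψ.map_adj_iff.mpr hxy
    exact hle.2 this
  have adjI : ∀ x y : ℕ, ∀ hx hy, (x ≠ y ∧ x < I + 5 ∧ y < I + 5 ∧
      (((y = x + 1 ∧ y ≤ I) ∨ (x = 0 ∧ (y = I + 1 ∨ y = I + 2)) ∨
        (x = I ∧ (y = I + 3 ∨ y = I + 4))) ∨
       ((x = y + 1 ∧ x ≤ I) ∨ (y = 0 ∧ (x = I + 1 ∨ x = I + 2)) ∨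
        (y = I ∧ (x = I + 3 ∨ x = I + 4))))) →
      ((treeFG I).coe).Adj ⟨x, hx⟩ ⟨y, hy⟩ := by
    intro x y hx hy h
    show (treeFG I).Adj x y
    rw [treeFG_adj]; exact h
  have vne : ∀ (x y : ↥(treeFG I).verts), x ≠ y → (↑(ψ x) : ℕ) ≠ ↑(ψ y) := by
    intro x y hxy h
    exact hxy (ψ.injective (Subtype.val_injective h))
  have sne : ∀ (x y : ℕ) hx hy, x ≠ y →
      (⟨x, hx⟩ : ↥(treeFG I).verts) ≠ ⟨y, hy⟩ := by
    intro x y hx hy h hc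
    exact h (congrArg Subtype.val hc)
  have ha3 : (↑a : ℕ) = 0 ∨ (↑a : ℕ) = J := by
    refine treeFG_deg3 (l := J)
      (key _ _ (adjI 0 1 (mem _ (by omega)) (mem _ (by omega)) (by omega)))
      (key _ _ (adjI 0 (I+1) (mem _ (by omega)) (mem _ (by omega)) (by omega)))
      (key _ _ (adjI 0 (I+2) (mem _ (by omega)) (mem _ (by omega)) (by omega)))
      (vne _ _ (sne _ _ _ _ (by omega))) (vne _ _ (sne _ _ _ _ (by omega)))
      (vne _ _ (sne _ _ _ _ (by omega)))
  have hb3 : (↑b : ℕ) = 0 ∨ (↑b : ℕ) = J := by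
    refine treeFG_deg3 (l := J)
      (key _ _ (adjI I (I-1) (mem _ (by omega)) (mem _ (by omega)) (by omega)))
      (key _ _ (adjI I (I+3) (mem _ (by omega)) (mem _ (by omega)) (by omega)))
      (key _ _ (adjI I (I+4) (mem _ (by omega)) (mem _ (by omega)) (by omega)))
      (vne _ _ (sne _ _ _ _ (by omega))) (vne _ _ (sne _ _ _ _ (by omega)))
      (vne _ _ (sne _ _ _ _ (by omega)))
  have hab : (↑a : ℕ) ≠ ↑b := vne _ _ (sne _ _ _ _ (by omega))
  obtain ⟨w0, hw0⟩ := treeFG_spine I I le_rfl (mem _ (by omega)) (mem I (by omega))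
  have hcopy : (⟨I - I, mem _ (by omega)⟩ : ↥(treeFG I).verts) = ⟨0, mem 0 (by omega)⟩ :=
    Subtype.ext (Nat.sub_self I)
  set w : ((treeFG I).coe).Walk ⟨0, mem 0 (by omega)⟩ ⟨I, mem I (by omega)⟩ :=
    w0.copy hcopy rfl with hwdef
  have hwlen : w.length = I := by rw [hwdef, Walk.length_copy, hw0]
  set w2 : (treeFG J).spanningCoe.Walk ↑a ↑b := (w.map ψ.toHom).map (leHom hle) with hw2def
  have hw2len : w2.length = I := by
    exact (Walk.length_map ..).trans ((Walk.length_map ..).trans hwlen)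
  rcases ha3 with ha0 | haJ <;> rcases hb3 with hb0 | hbJ
  · exact hab (ha0.trans hb0.symm)
  · have := treeFG_walk_lb (w2.copy ha0 hbJ)
    rw [Walk.length_copy, hw2len] at this
    omega
  · have := treeFG_walk_lb (w2.reverse.copy hb0 haJ)
    rw [Walk.length_copy, Walk.length_reverse, hw2len] at this
    omega
  · exact hab (haJ.trans hbJ.symm)

/-- The bipartite minor relation is not a well-quasi-order on the class of all
bipartite graphs: there is an infinite sequence of (finite) bipartite graphs — in fact,
forests — `G_1, G_2, …` such that for no `i < j` does `G_i ≤_B G_j` hold. -/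
theorem bipMinor_not_wqo_on_bipartite :
    ∃ G : ℕ → FG,
      (∀ n, (G n).verts.Finite ∧ ForestFG (G n) ∧ BipartiteFG (G n)) ∧
      (∀ i j, i < j → ¬ BipMinor (G i) (G j)) := by
  refine ⟨fun n => treeFG (n + 1), fun n => ⟨?_, ?_, ?_⟩, ?_⟩
  · rw [treeFG_verts]
    exact Set.finite_lt_nat _
  · exact treeFG_coe_acyclic _
  · exact treeFG_colorable _
  · rintro i j hij ⟨H', hchain, hiso⟩
    obtain ⟨φ⟩ := hiso
    exact not_embed (by omega) (by omega) (chain_le hchain) φ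
end
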